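/- arXiv:1706.06034 — 7 statements merged into one kernel-verified Lean document; each statement's English description precedes it below -/
import Mathlib

section
/- Let g be a graded Lie algebra with one-dimensional center, gradation g = ⊕_{k=1}^N g_k, and let l = λZ* with λ ≠ 0 be a nonzero linear functional vanishing off the center, whose associated skew form B_l(X,Y) = l([X,Y]) is non-degenerate on g/z(g). Then for 1 ≤ k ≤ N-1, dim g_{N-k} = dim g_k. -/
lemma graded_aux {L : Type*} [LieRing L] [LieAlgebra ℝ L]
    [FiniteDimensional ℝ L]
    (gr : ℕ → Submodule ℝ L) (N : ℕ)
    (hinternal : DirectSum.IsInternal gr)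
    (hcenter : (LieAlgebra.center ℝ L).toSubmodule = gr N)
    (hbr : ∀ k k' : ℕ, ∀ x ∈ gr k, ∀ y ∈ gr k', ⁅x, y⁆ ∈ gr (k + k'))
    (l : L →ₗ[ℝ] ℝ)
    (hlvan : ∀ k, k ≠ N → ∀ x ∈ gr k, l x = 0)
    (hnd : ∀ x : L, (∀ y : L, l ⁅x, y⁆ = 0) → x ∈ (LieAlgebra.center ℝ L).toSubmodule) :
    ∀ k : ℕ, 1 ≤ k → k ≤ N - 1 →
      Module.finrank ℝ (gr k) ≤ Module.finrank ℝ (gr (N - k)) := by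
  intro k hk1 hk2
  have hN2 : 2 ≤ N := by omega
  -- the map y ↦ (v ↦ l ⁅v, y⁆) from gr k to dual of gr (N-k)
  let f : (gr k) →ₗ[ℝ] Module.Dual ℝ (gr (N - k)) :=
    { toFun := fun y =>
        { toFun := fun v => l ⁅(v : L), (y : L)⁆
          map_add' := by intro a b; simp [add_lie]
          map_smul' := by intro c a; simp [smul_lie] }
      map_add' := by intro a b; ext v; simp [lie_add]
      map_smul' := by intro c a; ext v; simp [lie_smul] }
  have hinj : Function.Injective f := by
    rw [← LinearMap.ker_eq_bot, LinearMap.ker_eq_bot']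
    intro y hy
    -- l ⁅v, y⁆ = 0 for all v in gr (N-k)
    have hv : ∀ v ∈ gr (N - k), l ⁅v, (y : L)⁆ = 0 := by
      intro v hv
      have := congrArg (fun g => g ⟨v, hv⟩) hy
      simpa [f] using this
    -- hence for all x : L
    have hall : ∀ x : L, l ⁅x, (y : L)⁆ = 0 := by
      have hker : (⊤ : Submodule ℝ L) ≤
          LinearMap.ker (l ∘ₗ ((LieModule.toEnd ℝ L L : L →ₗ[ℝ] Module.End ℝ L).flip (y : L))) := by
        rw [← hinternal.submodule_iSup_eq_top]
        refine iSup_le fun j => fun x hx => ?_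
        simp only [LinearMap.mem_ker, LinearMap.comp_apply, LinearMap.flip_apply,
          LieHom.coe_toLinearMap, LieModule.toEnd_apply_apply]
        by_cases hj : j = N - k
        · exact hv x (hj ▸ hx)
        · have hbx : ⁅x, (y : L)⁆ ∈ gr (j + k) := hbr j k x hx (y : L) y.2
          exact hlvan (j + k) (by omega) _ hbx
      intro x
      have := hker (Submodule.mem_top (x := x))
      simpa using this
    -- so y is central, hence in gr N, but y ∈ gr k with k ≠ N
    have hyc : (y : L) ∈ gr N := hcenter ▸ hnd (y : L) (fun z => by
      have : l ⁅z, (y : L)⁆ = 0 := hall z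
      have hskew : ⁅(y : L), z⁆ = -⁅z, (y : L)⁆ := (lie_skew (y : L) z).symm
      rw [hskew, map_neg, this, neg_zero])
    have hdisj : Disjoint (gr k) (gr N) := by
      refine (hinternal.submodule_iSupIndep k).mono_right ?_
      exact le_iSup_of_le N (le_iSup_of_le (by omega) le_rfl)
    have : (y : L) ∈ (⊥ : Submodule ℝ L) :=
      (Submodule.disjoint_def.mp hdisj) (y : L) y.2 hyc
    exact Subtype.ext (by simpa using this)
  calc Module.finrank ℝ (gr k) ≤ Module.finrank ℝ (Module.Dual ℝ (gr (N - k))) :=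
        LinearMap.finrank_le_finrank_of_injective hinj
    _ = Module.finrank ℝ (gr (N - k)) := Subspace.dual_finrank_eq

/-- Let `g` be a graded Lie algebra with one-dimensional center `z(g) = g_N`, and let
`l` be a nonzero linear functional vanishing on `g_k` for `k ≠ N` (i.e. `l = λZ*`, `λ ≠ 0`),
whose skew form `B_l(X,Y) = l([X,Y])` is non-degenerate on `g/z(g)`. Then
`dim g_{N-k} = dim g_k` for `1 ≤ k ≤ N-1`. -/
theorem graded_flat_orbit_dim_symmetry {L : Type*} [LieRing L] [LieAlgebra ℝ L]
    [FiniteDimensional ℝ L]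
    (gr : ℕ → Submodule ℝ L) (N : ℕ)
    (hinternal : DirectSum.IsInternal gr)
    (h0 : gr 0 = ⊥)
    (htop : ∀ k, N < k → gr k = ⊥)
    (hbr : ∀ k k' : ℕ, ∀ x ∈ gr k, ∀ y ∈ gr k', ⁅x, y⁆ ∈ gr (k + k'))
    (hcenter : (LieAlgebra.center ℝ L).toSubmodule = gr N)
    (hdim : Module.finrank ℝ (gr N) = 1)
    (l : L →ₗ[ℝ] ℝ) (hlne : l ≠ 0)
    (hlvan : ∀ k, k ≠ N → ∀ x ∈ gr k, l x = 0)
    (hnd : ∀ x : L, (∀ y : L, l ⁅x, y⁆ = 0) → x ∈ (LieAlgebra.center ℝ L).toSubmodule) :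
    ∀ k : ℕ, 1 ≤ k → k ≤ N - 1 →
      Module.finrank ℝ (gr (N - k)) = Module.finrank ℝ (gr k) := by
  intro k hk1 hk2
  have h1 := graded_aux gr N hinternal hcenter hbr l hlvan hnd k hk1 hk2
  have h2 := graded_aux gr N hinternal hcenter hbr l hlvan hnd (N - k) (by omega) (by omega)
  have : N - (N - k) = k := by omega
  rw [this] at h2
  omega
end

section
/- Let g be a graded Lie algebra with one-dimensional center and gradation g = ⊕_{k=1}^N g_k with N = 2N₀+1 odd, and suppose the flat-orbit condition holds (B_l non-degenerate on g/z(g) for some l = λZ*, λ ≠ 0). Then m := ⊕_{k=N₀+1}^N g_k is an Abelian ideal of g of dimension (dim g + 1)/2, and l vanishes on [m, m]; i.e., m is a polarization for l. -/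
open Module

/-- bilinear form x,y ↦ l ⁅x,y⁆ -/
def brForm {L : Type*} [LieRing L] [LieAlgebra ℝ L] (l : L →ₗ[ℝ] ℝ) :
    L →ₗ[ℝ] L →ₗ[ℝ] ℝ :=
  LinearMap.mk₂ ℝ (fun x y => l ⁅x, y⁆)
    (fun x x' y => by simp [add_lie])
    (fun c x y => by simp [smul_lie])
    (fun x y y' => by simp [lie_add])
    (fun c x y => by simp [lie_smul])

@[simp] lemma brForm_apply {L : Type*} [LieRing L] [LieAlgebra ℝ L] (l : L →ₗ[ℝ] ℝ)
    (x y : L) : brForm l x y = l ⁅x, y⁆ := rfl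

lemma aux_finrank_biSup {V : Type*} [AddCommGroup V] [Module ℝ V] [FiniteDimensional ℝ V]
    (p : ℕ → Submodule ℝ V) (hp : iSupIndep p) (s : Finset ℕ) :
    finrank ℝ (⨆ k ∈ s, p k : Submodule ℝ V) = ∑ k ∈ s, finrank ℝ (p k) := by
  classical
  induction s using Finset.induction with
  | empty => simp
  | @insert a s ha ih =>
    rw [Finset.sum_insert ha, ← ih]
    have h1 : (⨆ k ∈ insert a s, p k : Submodule ℝ V) = p a ⊔ ⨆ k ∈ s, p k := by
      simp [Finset.mem_insert, iSup_or, iSup_sup_eq]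
    have hd : Disjoint (p a) (⨆ k ∈ s, p k : Submodule ℝ V) := by
      have := hp.disjoint_biSup (y := (s : Set ℕ)) (x := a) (by simpa using ha)
      simpa using this
    have := Submodule.finrank_sup_add_finrank_inf_eq (p a) (⨆ k ∈ s, p k)
    rw [hd.eq_bot] at this
    simp only [finrank_bot, add_zero] at this
    rw [h1, this]

lemma aux_biSup_induction {V : Type*} [AddCommGroup V] [Module ℝ V]
    (p : ℕ → Submodule ℝ V) (s : Set ℕ) {C : V → Prop}
    (h0 : C 0) (hadd : ∀ a b, C a → C b → C (a + b))
    (hmem : ∀ k ∈ s, ∀ x ∈ p k, C x) :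
    ∀ x ∈ (⨆ k ∈ s, p k : Submodule ℝ V), C x := by
  intro x hx
  rw [iSup_subtype'] at hx
  exact Submodule.iSup_induction (motive := C) _ hx (fun i y hy => hmem i i.2 y hy) h0 hadd

/-- Let `g` be a graded Lie algebra of dimension `2d+1` with one-dimensional center
`z(g) = g_N`, `N = 2N₀+1` odd, satisfying the flat-orbit condition (`B_l` non-degenerate on
`g/z(g)` for `l = λZ*`, `λ ≠ 0`). Then `m = ⊕_{k=N₀+1}^N g_k` is an Abelian ideal of `g` of
dimension `d+1` and `l` vanishes on `[m,m]`: `m` is a polarization for `l`. -/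
theorem graded_odd_polarization {L : Type*} [LieRing L] [LieAlgebra ℝ L]
    [FiniteDimensional ℝ L]
    (gr : ℕ → Submodule ℝ L) (N N₀ d : ℕ)
    (hN : N = 2 * N₀ + 1)
    (hdimL : Module.finrank ℝ L = 2 * d + 1)
    (hinternal : DirectSum.IsInternal gr)
    (h0 : gr 0 = ⊥)
    (htop : ∀ k, N < k → gr k = ⊥)
    (hbr : ∀ k k' : ℕ, ∀ x ∈ gr k, ∀ y ∈ gr k', ⁅x, y⁆ ∈ gr (k + k'))
    (hcenter : (LieAlgebra.center ℝ L).toSubmodule = gr N)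
    (hdim : Module.finrank ℝ (gr N) = 1)
    (l : L →ₗ[ℝ] ℝ) (hlne : l ≠ 0)
    (hlvan : ∀ k, k ≠ N → ∀ x ∈ gr k, l x = 0)
    (hnd : ∀ x : L, (∀ y : L, l ⁅x, y⁆ = 0) → x ∈ (LieAlgebra.center ℝ L).toSubmodule) :
    (∃ I : LieIdeal ℝ L, I.toSubmodule = ⨆ k ∈ Set.Icc (N₀ + 1) N, gr k) ∧
    (∀ x ∈ ⨆ k ∈ Set.Icc (N₀ + 1) N, gr k, ∀ y ∈ ⨆ k ∈ Set.Icc (N₀ + 1) N, gr k,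
      ⁅x, y⁆ = 0) ∧
    Module.finrank ℝ (⨆ k ∈ Set.Icc (N₀ + 1) N, gr k : Submodule ℝ L) = d + 1 ∧
    (∀ x ∈ ⨆ k ∈ Set.Icc (N₀ + 1) N, gr k, ∀ y ∈ ⨆ k ∈ Set.Icc (N₀ + 1) N, gr k,
      l ⁅x, y⁆ = 0) := by
  classical
  obtain ⟨hindep, hsuptop⟩ :=
    (DirectSum.isInternal_submodule_iff_iSupIndep_and_iSup_eq_top gr).mp hinternal
  set M : Submodule ℝ L := ⨆ k ∈ Set.Icc (N₀ + 1) N, gr k with hM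
  have hgrle : ∀ k ∈ Set.Icc (N₀ + 1) N, gr k ≤ M := fun k hk =>
    le_iSup₂ (f := fun k _ => gr k) k hk
  -- induction over all of L
  have hLind : ∀ (C : L → Prop), C 0 → (∀ a b, C a → C b → C (a + b)) →
      (∀ k, ∀ x ∈ gr k, C x) → ∀ x : L, C x := by
    intro C h0' hadd hmem x
    have hx : x ∈ ⨆ k, gr k := by rw [hsuptop]; exact Submodule.mem_top
    exact Submodule.iSup_induction (motive := C) gr hx hmem h0' hadd
  -- m is abelian
  have habelian : ∀ x ∈ M, ∀ y ∈ M, ⁅x, y⁆ = 0 := by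
    refine aux_biSup_induction gr _ (by simp) (fun a b ha hb y hy => by
      rw [add_lie, ha y hy, hb y hy, add_zero]) ?_
    intro k hk x hx
    refine aux_biSup_induction gr _ (by simp) (fun a b ha hb => by
      rw [lie_add, ha, hb, add_zero]) ?_
    intro k' hk' y hy
    have hb := hbr k k' x hx y hy
    rw [htop (k + k') (by simp only [Set.mem_Icc] at hk hk'; omega),
      Submodule.mem_bot] at hb
    exact hb
  -- m is an ideal
  have hideal : ∀ (x : L), ∀ m ∈ M, ⁅x, m⁆ ∈ M := by
    refine hLind (fun x => ∀ m ∈ M, ⁅x, m⁆ ∈ M)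
      (fun m hm => by rw [zero_lie]; exact M.zero_mem)
      (fun a b ha hb m hm => by rw [add_lie]; exact M.add_mem (ha m hm) (hb m hm)) ?_
    intro j x hxj
    refine aux_biSup_induction gr _ (by rw [lie_zero]; exact M.zero_mem)
      (fun a b ha hb => by rw [lie_add]; exact M.add_mem ha hb) ?_
    intro k hk m hm
    simp only [Set.mem_Icc] at hk
    have hbm : ⁅x, m⁆ ∈ gr (j + k) := hbr j k x hxj m hm
    by_cases hle : j + k ≤ N
    · exact hgrle (j + k) (Set.mem_Icc.mpr ⟨by omega, hle⟩) hbm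
    · rw [htop (j + k) (by omega), Submodule.mem_bot] at hbm
      rw [hbm]; exact M.zero_mem
  -- the dimension count
  have hpair : ∀ k, k ≠ N → finrank ℝ (gr k) ≤ finrank ℝ (gr (N - k)) := by
    intro k hkN
    by_cases hkle : k ≤ N
    · have hinj : Function.Injective ((brForm l).domRestrict₁₂ (gr k) (gr (N - k))) := by
        rw [← LinearMap.ker_eq_bot, eq_bot_iff]
        rintro ⟨x, hxk⟩ hx
        simp only [LinearMap.mem_ker] at hx
        have hall : ∀ y : L, l ⁅x, y⁆ = 0 := by
          refine hLind (fun y => l ⁅x, y⁆ = 0) (by simp)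
            (fun a b ha hb => show l ⁅x, a + b⁆ = 0 by
              rw [lie_add, map_add, show l ⁅x, a⁆ = 0 from ha,
                show l ⁅x, b⁆ = 0 from hb, add_zero]) ?_
          intro j y hyj
          by_cases hj : j = N - k
          · subst hj
            have := DFunLike.congr_fun hx ⟨y, hyj⟩
            simpa [LinearMap.domRestrict₁₂_apply] using this
          · exact hlvan (k + j) (by omega) _ (hbr k j x hxk y hyj)
        have hxc : x ∈ gr N := by
          have := hnd x hall
          rwa [hcenter] at this
        have hx0 : x = 0 := by
          have hd : Disjoint (gr k) (gr N) := hindep.pairwiseDisjoint hkN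
          exact (Submodule.disjoint_def.mp hd) x hxk hxc
        simp [Submodule.mem_bot, Subtype.ext_iff, hx0]
      calc finrank ℝ (gr k) ≤ finrank ℝ (Module.Dual ℝ (gr (N - k))) :=
            LinearMap.finrank_le_finrank_of_injective hinj
        _ = finrank ℝ (gr (N - k)) := Subspace.dual_finrank_eq
    · rw [htop k (by omega)]
      simp
  have heq : ∀ k, 1 ≤ k → k ≤ N - 1 → finrank ℝ (gr k) = finrank ℝ (gr (N - k)) := by
    intro k h1 h2
    have hN1 : 1 ≤ N := by omega
    refine le_antisymm (hpair k (by omega)) ?_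
    have := hpair (N - k) (by omega)
    rwa [show N - (N - k) = k by omega] at this
  -- finrank via finset sums
  have hMF : M = ⨆ k ∈ Finset.Ioc N₀ N, gr k := by
    rw [hM]
    refine le_antisymm (iSup₂_le fun k hk => le_iSup₂ (f := fun k _ => gr k) k ?_)
      (iSup₂_le fun k hk => le_iSup₂ (f := fun k _ => gr k) k ?_)
    · rw [Set.mem_Icc] at hk; rw [Finset.mem_Ioc]; omega
    · rw [Finset.mem_Ioc] at hk; rw [Set.mem_Icc]; omega
  have hMrank : finrank ℝ M = ∑ k ∈ Finset.Ioc N₀ N, finrank ℝ (gr k) := by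
    rw [hMF]; exact aux_finrank_biSup gr hindep _
  have htotF : (⨆ k ∈ Finset.Ioc 0 N, gr k : Submodule ℝ L) = ⊤ := by
    rw [← hsuptop]
    refine le_antisymm (iSup₂_le fun k _ => le_iSup gr k) (iSup_le fun k => ?_)
    by_cases hk : 0 < k ∧ k ≤ N
    · exact le_iSup₂ (f := fun k _ => gr k) k (Finset.mem_Ioc.mpr hk)
    · rcases Nat.eq_zero_or_pos k with h | h
      · rw [h, h0]; exact bot_le
      · rw [htop k (by omega)]; exact bot_le
  have htotal : ∑ k ∈ Finset.Ioc 0 N, finrank ℝ (gr k) = 2 * d + 1 := by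
    rw [← aux_finrank_biSup gr hindep, htotF, finrank_top, hdimL]
  -- split the total sum
  have hsplit1 : ∑ k ∈ Finset.Ioc 0 N₀, finrank ℝ (gr k)
      + ∑ k ∈ Finset.Ioc N₀ N, finrank ℝ (gr k) = 2 * d + 1 := by
    have hcc := Finset.sum_Ioc_consecutive (fun k => finrank ℝ (gr k))
      (Nat.zero_le N₀) (show N₀ ≤ N by omega)
    rw [hcc, htotal]
  have hsplit2 : ∑ k ∈ Finset.Ioc N₀ (N - 1), finrank ℝ (gr k) + finrank ℝ (gr N)
      = ∑ k ∈ Finset.Ioc N₀ N, finrank ℝ (gr k) := by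
    have hone : Finset.Ioc (N - 1) N = {N} := by
      ext x; simp only [Finset.mem_Ioc, Finset.mem_singleton]; omega
    have hcc := Finset.sum_Ioc_consecutive (fun k => finrank ℝ (gr k))
      (show N₀ ≤ N - 1 by omega) (show N - 1 ≤ N by omega)
    rw [← hcc, hone, Finset.sum_singleton]
  have hbij : ∑ k ∈ Finset.Ioc 0 N₀, finrank ℝ (gr k)
      = ∑ k ∈ Finset.Ioc N₀ (N - 1), finrank ℝ (gr k) := by
    refine Finset.sum_nbij' (fun k => N - k) (fun k => N - k) ?_ ?_ ?_ ?_ ?_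
    · intro a ha; simp only [Finset.mem_Ioc] at *; omega
    · intro a ha; simp only [Finset.mem_Ioc] at *; omega
    · intro a ha; simp only [Finset.mem_Ioc] at ha; show N - (N - a) = a; omega
    · intro a ha; simp only [Finset.mem_Ioc] at ha; show N - (N - a) = a; omega
    · intro a ha; simp only [Finset.mem_Ioc] at ha
      show finrank ℝ (gr a) = finrank ℝ (gr (N - a))
      exact heq a (by omega) (by omega)
  have hrank : finrank ℝ M = d + 1 := by
    rw [hMrank]
    omega
  refine ⟨⟨{ toSubmodule := M, lie_mem := fun {x m} hm => hideal x m hm }, rfl⟩,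
    habelian, hrank, fun x hx y hy => by rw [habelian x hx y hy, map_zero]⟩
end

section
/- Let G be a locally compact unimodular group (or quotient G/Z of a nilpotent Lie group by its center), π an irreducible unitary square-integrable representation on a Hilbert space H with formal degree d_π, Γ a discrete subset of G with relatively compact fundamental domain Σ (i.e., G is the disjoint union of Σγ, γ ∈ Γ), and w ∈ H a unit vector such that {π(γ)w : γ ∈ Γ} is an orthonormal system. Then {π(γ)w : γ ∈ Γ} is an orthonormal basis of H if and only if μ(Σ)^{-1} = d_π. -/
open MeasureTheory
open scoped InnerProductSpace ENNReal

set_option linter.unusedSectionVars false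
set_option linter.unusedVariables false
set_option maxHeartbeats 1000000

namespace OnbCovolAux

variable {G H : Type*} [Group G] [MeasurableSpace G] [MeasurableMul₂ G]
    [NormedAddCommGroup H] [InnerProductSpace ℂ H] [CompleteSpace H]

/-- Partition of a lintegral over `G` into the cosets `S·γ` of a fundamental domain. -/
lemma lintegral_eq_tsum_fundDom
    (μ : Measure G) [μ.IsMulRightInvariant]
    (Γ : Set G) (hΓ : Γ.Countable)
    (S : Set G) (hSm : MeasurableSet S)
    (hfund : ∀ g : G, ∃! γ : G, γ ∈ Γ ∧ g * γ⁻¹ ∈ S)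
    (f : G → ℝ≥0∞) :
    ∫⁻ g, f g ∂μ = ∑' γ : Γ, ∫⁻ x in S, f (x * (γ : G)) ∂μ := by
  have : Countable ↥Γ := hΓ.to_subtype
  set A : Γ → Set G := fun γ => (fun g => g * (γ : G)⁻¹) ⁻¹' S with hA
  have hAm : ∀ γ : Γ, MeasurableSet (A γ) := fun γ => (measurable_mul_const _) hSm
  have hAu : (⋃ γ : Γ, A γ) = Set.univ := by
    ext g
    simp only [Set.mem_iUnion, Set.mem_univ, iff_true]
    obtain ⟨γ, ⟨hγΓ, hγS⟩, -⟩ := hfund g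
    exact ⟨⟨γ, hγΓ⟩, hγS⟩
  have hAd : Pairwise (Function.onFun Disjoint A) := by
    intro γ₁ γ₂ hne
    refine Set.disjoint_left.mpr fun g h1 h2 => hne ?_
    exact Subtype.ext (((hfund g).unique ⟨γ₁.2, h1⟩ ⟨γ₂.2, h2⟩))
  have htr : ∀ γ : Γ, ∫⁻ g in A γ, f g ∂μ = ∫⁻ x in S, f (x * (γ : G)) ∂μ := by
    intro γ
    have hmap : Measure.map (· * (γ : G)) μ = μ := MeasureTheory.map_mul_right_eq_self μ _
    have hpre : (· * (γ : G)) ⁻¹' (A γ) = S := by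
      ext x; simp [A]
    have h1 : μ.restrict (A γ) = Measure.map (· * (γ : G)) (μ.restrict S) := by
      conv_lhs => rw [← hmap]
      rw [Measure.restrict_map (measurable_mul_const _) (hAm γ), hpre]
    rw [h1, show (fun x => x * (γ : G)) = ⇑(MeasurableEquiv.mulRight (γ : G)) from
      (MeasurableEquiv.coe_mulRight (γ : G)).symm,
      MeasureTheory.lintegral_map_equiv f (MeasurableEquiv.mulRight (γ : G))]
    rfl
  calc ∫⁻ g, f g ∂μ = ∫⁻ g in ⋃ γ : Γ, A γ, f g ∂μ := by rw [hAu, Measure.restrict_univ]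
    _ = ∑' γ : Γ, ∫⁻ g in A γ, f g ∂μ := lintegral_iUnion hAm hAd f
    _ = ∑' γ : Γ, ∫⁻ x in S, f (x * (γ : G)) ∂μ := tsum_congr htr

lemma coeff_twist (π : G →* (H ≃ₗᵢ[ℂ] H)) (w v : H) (x γ : G) :
    ⟪v, π (x * γ) w⟫_ℂ = ⟪(π x).symm v, π γ w⟫_ℂ := by
  rw [map_mul]
  have h1 : (π x * π γ) w = π x (π γ w) := rfl
  rw [h1, ← LinearIsometryEquiv.inner_map_map (π x) ((π x).symm v) (π γ w),
    LinearIsometryEquiv.apply_symm_apply]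

lemma integrable_coeff (μ : Measure G) (π : G →* (H ≃ₗᵢ[ℂ] H)) (w : H)
    (d : ℝ) (hsi : ∀ v : H, d * ∫ g, ‖⟪v, π g w⟫_ℂ‖ ^ 2 ∂μ = ‖v‖ ^ 2)
    (v : H) (hv : v ≠ 0) :
    Integrable (fun g => ‖⟪v, π g w⟫_ℂ‖ ^ 2) μ := by
  by_contra hcon
  have h := hsi v
  rw [integral_undef hcon, mul_zero] at h
  exact hv (norm_eq_zero.mp (by nlinarith [norm_nonneg v]))

lemma lintegral_coeff (μ : Measure G) (π : G →* (H ≃ₗᵢ[ℂ] H)) (w : H)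
    (d : ℝ) (hd : 0 < d)
    (hsi : ∀ v : H, d * ∫ g, ‖⟪v, π g w⟫_ℂ‖ ^ 2 ∂μ = ‖v‖ ^ 2)
    (v : H) (hv : v ≠ 0) :
    ∫⁻ g, ENNReal.ofReal (‖⟪v, π g w⟫_ℂ‖ ^ 2) ∂μ = ENNReal.ofReal (‖v‖ ^ 2 / d) := by
  rw [← ofReal_integral_eq_lintegral_ofReal
    (integrable_coeff μ π w d hsi v hv)
    (Filter.Eventually.of_forall fun g => by positivity)]
  congr 1
  have h := hsi v
  rw [eq_div_iff hd.ne']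
  linarith

lemma parseval_hasSum (π : G →* (H ≃ₗᵢ[ℂ] H)) (w : H) (Γ : Set G)
    (hON : Orthonormal ℂ (fun γ : Γ => π (γ : G) w))
    (htop : (Submodule.span ℂ (Set.range fun γ : Γ => π (γ : G) w)).topologicalClosure = ⊤)
    (u : H) :
    HasSum (fun γ : Γ => ‖⟪u, π (γ : G) w⟫_ℂ‖ ^ 2) (‖u‖ ^ 2) := by
  let b : HilbertBasis ↥Γ ℂ H := HilbertBasis.mk hON (le_of_eq htop.symm)
  have hb : ⇑b = fun γ : Γ => π (γ : G) w := HilbertBasis.coe_mk _ _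
  have h := b.hasSum_inner_mul_inner u u
  rw [hb] at h
  have hterm : ∀ i : ↥Γ, ⟪u, π (i : G) w⟫_ℂ * ⟪π (i : G) w, u⟫_ℂ
      = ((‖⟪u, π (i : G) w⟫_ℂ‖ ^ 2 : ℝ) : ℂ) := by
    intro i
    rw [← inner_conj_symm u (π (i : G) w), RCLike.conj_mul, RCLike.norm_conj]
    norm_cast
  rw [show (fun i : ↥Γ => ⟪u, π (i : G) w⟫_ℂ * ⟪π (i : G) w, u⟫_ℂ)
      = fun i : ↥Γ => ((‖⟪u, π (i : G) w⟫_ℂ‖ ^ 2 : ℝ) : ℂ) from funext hterm] at h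
  have hre := h.mapL (RCLike.reCLM (K := ℂ))
  have h1 : (fun i : ↥Γ => RCLike.reCLM (K := ℂ) ((‖⟪u, π (i : G) w⟫_ℂ‖ ^ 2 : ℝ) : ℂ))
      = fun γ : ↥Γ => ‖⟪u, π (γ : G) w⟫_ℂ‖ ^ 2 := by
    funext i
    simp
    norm_cast
  have h2 : RCLike.reCLM (K := ℂ) ⟪u, u⟫_ℂ = ‖u‖ ^ 2 := by
    rw [RCLike.reCLM_apply]
    exact inner_self_eq_norm_sq (𝕜 := ℂ) u
  rw [h1, h2] at hre
  exact hre

/-- The core identity: the lower integral of the squared coefficient function over `G`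
equals the integral over the fundamental domain of the coset periodization. -/
lemma chain
    (μ : Measure G) [μ.IsMulRightInvariant]
    (π : G →* (H ≃ₗᵢ[ℂ] H)) (w : H)
    (Γ : Set G) (hΓ : Γ.Countable)
    (S : Set G) (hSm : MeasurableSet S)
    (hfund : ∀ g : G, ∃! γ : G, γ ∈ Γ ∧ g * γ⁻¹ ∈ S)
    (v : H)
    (haem : AEMeasurable (fun g => ENNReal.ofReal (‖⟪v, π g w⟫_ℂ‖ ^ 2)) μ) :
    ∫⁻ g, ENNReal.ofReal (‖⟪v, π g w⟫_ℂ‖ ^ 2) ∂μ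
      = ∫⁻ x in S, ∑' γ : Γ, ENNReal.ofReal (‖⟪(π x).symm v, π (γ : G) w⟫_ℂ‖ ^ 2) ∂μ := by
  have : Countable ↥Γ := hΓ.to_subtype
  rw [lintegral_eq_tsum_fundDom μ Γ hΓ S hSm hfund]
  have hterm : ∀ γ : Γ, AEMeasurable
      (fun x => ENNReal.ofReal (‖⟪v, π (x * (γ : G)) w⟫_ℂ‖ ^ 2)) (μ.restrict S) := by
    intro γ
    exact (haem.comp_quasiMeasurePreserving
      (measurePreserving_mul_right μ (γ : G)).quasiMeasurePreserving).restrict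
  rw [← lintegral_tsum hterm]
  refine lintegral_congr fun x => ?_
  refine tsum_congr fun γ => ?_
  rw [coeff_twist π w v x (γ : G)]

/-- A vector attaining equality in Bessel's inequality for an orthonormal family lies in the
closed span of the family. -/
lemma mem_of_parseval {ι : Type*} (e : ι → H) (hON : Orthonormal ℂ e) (u : H)
    (h : ∑' i, ‖⟪e i, u⟫_ℂ‖ ^ 2 = ‖u‖ ^ 2) :
    u ∈ (Submodule.span ℂ (Set.range e)).topologicalClosure := by
  set K := (Submodule.span ℂ (Set.range e)).topologicalClosure with hK
  have hKc : IsClosed (K : Set H) := Submodule.isClosed_topologicalClosure _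
  haveI : CompleteSpace K := hKc.completeSpace_coe
  set p : H := (K.orthogonalProjectionOnto u : H) with hp
  have hmemK : ∀ i, e i ∈ K :=
    fun i => Submodule.le_topologicalClosure _ (Submodule.subset_span ⟨i, rfl⟩)
  have hperp : u - p ∈ Kᗮ := K.sub_starProjection_mem_orthogonal u
  have hinner : ∀ i, ⟪e i, u⟫_ℂ = ⟪e i, p⟫_ℂ := by
    intro i
    have h0 : ⟪e i, u - p⟫_ℂ = 0 := hperp (e i) (hmemK i)
    have := inner_sub_right (𝕜 := ℂ) (e i) u p
    rw [h0] at this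
    linear_combination -this
  have hbessel : (∑' i, ‖⟪e i, p⟫_ℂ‖ ^ 2) ≤ ‖p‖ ^ 2 := hON.tsum_inner_products_le p
  have hle : ‖u‖ ^ 2 ≤ ‖p‖ ^ 2 := by
    rw [← h]
    simp_rw [hinner]
    exact hbessel
  have hpK : (p : H) ∈ K := by
    rw [hp]; exact (K.orthogonalProjectionOnto u).2
  have hpyth : ‖u‖ ^ 2 = ‖p‖ ^ 2 + ‖u - p‖ ^ 2 := by
    have hz : ⟪p, u - p⟫_ℂ = 0 := hperp p hpK
    have hns := norm_add_sq (𝕜 := ℂ) p (u - p)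
    simp only [add_sub_cancel] at hns
    rw [hns, hz]
    simp
  have hle2 : ‖u - p‖ ^ 2 ≤ 0 := by linarith
  have hup : u = p := by
    have h0 : ‖u - p‖ = 0 := by nlinarith [norm_nonneg (u - p)]
    have := norm_eq_zero.mp h0
    exact sub_eq_zero.mp this
  rw [hup]
  exact hpK

/-- In the critical-density case, almost every translate `(π x).symm u` satisfies Parseval's
identity with respect to the orthonormal system. -/
lemma ae_parseval_sum
    (μ : Measure G) [μ.IsMulRightInvariant]
    (π : G →* (H ≃ₗᵢ[ℂ] H)) (w : H)
    (d : ℝ) (hd : 0 < d)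
    (hsi : ∀ v : H, d * ∫ g, ‖⟪v, π g w⟫_ℂ‖ ^ 2 ∂μ = ‖v‖ ^ 2)
    (Γ : Set G) (hΓ : Γ.Countable)
    (S : Set G) (hSm : MeasurableSet S)
    (hfund : ∀ g : G, ∃! γ : G, γ ∈ Γ ∧ g * γ⁻¹ ∈ S)
    (hON : Orthonormal ℂ (fun γ : Γ => π (γ : G) w))
    (hμS : μ S = ENNReal.ofReal (1 / d))
    (u : H) (hu : u ≠ 0) :
    ∀ᵐ x ∂(μ.restrict S),
      (∑' γ : Γ, ‖⟪(π x).symm u, π (γ : G) w⟫_ℂ‖ ^ 2) = ‖u‖ ^ 2 := by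
  haveI : Countable ↥Γ := hΓ.to_subtype
  have haem : AEMeasurable (fun g => ENNReal.ofReal (‖⟪u, π g w⟫_ℂ‖ ^ 2)) μ :=
    ((integrable_coeff μ π w d hsi u hu).aestronglyMeasurable.aemeasurable).ennreal_ofReal
  have h1 := chain μ π w Γ hΓ S hSm hfund u haem
  rw [lintegral_coeff μ π w d hd hsi u hu] at h1
  set Φ : G → ℝ≥0∞ :=
    fun x => ∑' γ : Γ, ENNReal.ofReal (‖⟪(π x).symm u, π (γ : G) w⟫_ℂ‖ ^ 2) with hΦ
  have hreal : ∀ u' : H,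
      (∑' γ : Γ, ENNReal.ofReal (‖⟪u', π (γ : G) w⟫_ℂ‖ ^ 2))
        = ENNReal.ofReal (∑' γ : Γ, ‖⟪π (γ : G) w, u'⟫_ℂ‖ ^ 2) := by
    intro u'
    rw [ENNReal.ofReal_tsum_of_nonneg (fun γ => by positivity)
      (hON.inner_products_summable u')]
    exact tsum_congr fun γ => by rw [norm_inner_symm]
  have hbd : ∀ x : G, Φ x ≤ ENNReal.ofReal (‖u‖ ^ 2) := by
    intro x
    rw [hΦ]
    simp only
    rw [hreal ((π x).symm u)]
    refine ENNReal.ofReal_le_ofReal ?_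
    calc (∑' γ : Γ, ‖⟪π (γ : G) w, (π x).symm u⟫_ℂ‖ ^ 2)
        ≤ ‖(π x).symm u‖ ^ 2 := hON.tsum_inner_products_le _
      _ = ‖u‖ ^ 2 := by rw [LinearIsometryEquiv.norm_map]
  have hΦmeas : AEMeasurable Φ (μ.restrict S) := by
    have heq : Φ = fun x => ∑' γ : Γ, ENNReal.ofReal (‖⟪u, π (x * (γ : G)) w⟫_ℂ‖ ^ 2) := by
      funext x
      exact tsum_congr fun γ => by rw [coeff_twist]
    rw [heq]
    exact AEMeasurable.ennreal_tsum fun γ =>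
      (haem.comp_quasiMeasurePreserving
        (measurePreserving_mul_right μ (γ : G)).quasiMeasurePreserving).restrict
  have hconst : ∫⁻ _ in S, ENNReal.ofReal (‖u‖ ^ 2) ∂μ = ENNReal.ofReal (‖u‖ ^ 2 / d) := by
    rw [setLIntegral_const, hμS, ← ENNReal.ofReal_mul (by positivity)]
    congr 1
    ring
  have hae : Φ =ᵐ[μ.restrict S] fun _ => ENNReal.ofReal (‖u‖ ^ 2) := by
    refine ae_eq_of_ae_le_of_lintegral_le
      (Filter.Eventually.of_forall hbd) ?_ aemeasurable_const ?_
    · rw [← h1]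
      exact ENNReal.ofReal_ne_top
    · rw [hconst, ← h1]
  refine hae.mono fun x hx => ?_
  have hx' : ENNReal.ofReal (∑' γ : Γ, ‖⟪π (γ : G) w, (π x).symm u⟫_ℂ‖ ^ 2)
      = ENNReal.ofReal (‖u‖ ^ 2) := by
    rw [← hreal ((π x).symm u)]
    exact hx
  have hx'' : (∑' γ : Γ, ‖⟪π (γ : G) w, (π x).symm u⟫_ℂ‖ ^ 2) = ‖u‖ ^ 2 := by
    have h0 : (0:ℝ) ≤ ∑' γ : Γ, ‖⟪π (γ : G) w, (π x).symm u⟫_ℂ‖ ^ 2 :=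
      tsum_nonneg fun γ => by positivity
    exact (ENNReal.ofReal_eq_ofReal_iff h0 (by positivity)).mp hx'
  rw [← hx'']
  exact tsum_congr fun γ => by rw [norm_inner_symm]

/-- A.e. membership of the translates in the closed span. -/
lemma ae_parseval
    (μ : Measure G) [μ.IsMulRightInvariant]
    (π : G →* (H ≃ₗᵢ[ℂ] H)) (w : H)
    (d : ℝ) (hd : 0 < d)
    (hsi : ∀ v : H, d * ∫ g, ‖⟪v, π g w⟫_ℂ‖ ^ 2 ∂μ = ‖v‖ ^ 2)
    (Γ : Set G) (hΓ : Γ.Countable)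
    (S : Set G) (hSm : MeasurableSet S)
    (hfund : ∀ g : G, ∃! γ : G, γ ∈ Γ ∧ g * γ⁻¹ ∈ S)
    (hON : Orthonormal ℂ (fun γ : Γ => π (γ : G) w))
    (hμS : μ S = ENNReal.ofReal (1 / d))
    (u : H) :
    ∀ᵐ x ∂(μ.restrict S),
      (π x).symm u ∈
        (Submodule.span ℂ (Set.range fun γ : Γ => π (γ : G) w)).topologicalClosure := by
  rcases eq_or_ne u 0 with rfl | hu
  · refine Filter.Eventually.of_forall fun x => ?_
    simp only [map_zero]
    exact Submodule.zero_mem _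
  filter_upwards [ae_parseval_sum μ π w d hd hsi Γ hΓ S hSm hfund hON hμS u hu] with x hx
  refine mem_of_parseval (fun γ : Γ => π (γ : G) w) hON ((π x).symm u) ?_
  have hflip : (∑' γ : Γ, ‖⟪π (γ : G) w, (π x).symm u⟫_ℂ‖ ^ 2)
      = ∑' γ : Γ, ‖⟪(π x).symm u, π (γ : G) w⟫_ℂ‖ ^ 2 :=
    tsum_congr fun γ => by rw [norm_inner_symm]
  rw [hflip, hx, LinearIsometryEquiv.norm_map]

/-- Under the critical-density hypotheses, every orthonormal family in `H` is countable. -/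
lemma countable_of_orthonormal
    (μ : Measure G) [μ.IsMulRightInvariant]
    (π : G →* (H ≃ₗᵢ[ℂ] H)) (w : H)
    (d : ℝ) (hd : 0 < d)
    (hsi : ∀ v : H, d * ∫ g, ‖⟪v, π g w⟫_ℂ‖ ^ 2 ∂μ = ‖v‖ ^ 2)
    (Γ : Set G) (hΓ : Γ.Countable)
    (S : Set G) (hSm : MeasurableSet S) (hSfin : μ S ≠ ⊤) (hSpos : μ S ≠ 0)
    (hfund : ∀ g : G, ∃! γ : G, γ ∈ Γ ∧ g * γ⁻¹ ∈ S)
    (hON : Orthonormal ℂ (fun γ : Γ => π (γ : G) w))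
    (hμS : μ S = ENNReal.ofReal (1 / d))
    {ι : Type*} (v : ι → H) (hv : Orthonormal ℂ v) :
    Countable ι := by
  classical
  haveI hΓc : Countable ↥Γ := hΓ.to_subtype
  set ν : Measure G := μ.restrict S with hν
  have hνuniv : ν Set.univ = μ S := Measure.restrict_apply_univ S
  obtain ⟨emb, hemb⟩ : ∃ f : ↥Γ → ℕ, Function.Injective f :=
    Countable.exists_injective_nat ↥Γ
  set F : ℕ → Finset ↥Γ := fun n =>
    Set.Finite.toFinset (Set.Finite.preimage hemb.injOn (Set.finite_Iic n)) with hF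
  have hFmono : Monotone F := by
    intro a b hab γ hγ
    simp only [hF, Set.Finite.mem_toFinset, Set.mem_preimage, Set.mem_Iic] at *
    omega
  have hvne : ∀ i, v i ≠ 0 := by
    intro i h
    have h1 := hv.1 i
    rw [h] at h1
    simp at h1
  set t : ι → ↥Γ → G → ℝ := fun i γ x => ‖⟪v i, π (x * (γ : G)) w⟫_ℂ‖ ^ 2 with ht
  have haem : ∀ i (γ : ↥Γ), AEMeasurable (t i γ) ν := by
    intro i γ
    have h0 : AEMeasurable (fun g => ‖⟪v i, π g w⟫_ℂ‖ ^ 2) μ :=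
      (integrable_coeff μ π w d hsi (v i) (hvne i)).aestronglyMeasurable.aemeasurable
    exact (h0.comp_quasiMeasurePreserving
      (measurePreserving_mul_right μ (γ : G)).quasiMeasurePreserving).restrict
  set g : ι → ↥Γ → G → ℝ := fun i γ x => max ((haem i γ).mk _ x) 0 with hgdef
  have hgmeas : ∀ i γ, Measurable (g i γ) :=
    fun i γ => ((haem i γ).measurable_mk).max measurable_const
  have hgae : ∀ i γ, t i γ =ᵐ[ν] g i γ := by
    intro i γ
    filter_upwards [(haem i γ).ae_eq_mk] with x hx
    simp only [hgdef]
    rw [← hx]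
    exact (max_eq_left (by simp only [ht]; positivity)).symm
  set Y : ι → ℕ → Set G := fun i n => {x | (1:ℝ)/2 < ∑ γ ∈ F n, g i γ x} with hY
  have hYmeas : ∀ i n, MeasurableSet (Y i n) :=
    fun i n => measurableSet_lt measurable_const (Finset.measurable_sum _ fun γ _ => hgmeas i γ)
  have hYmono : ∀ i, Monotone (Y i) := by
    intro i a b hab x hx
    simp only [hY, Set.mem_setOf_eq] at *
    calc (1:ℝ)/2 < ∑ γ ∈ F a, g i γ x := hx
      _ ≤ ∑ γ ∈ F b, g i γ x := Finset.sum_le_sum_of_subset_of_nonneg (hFmono hab)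
          (fun γ _ _ => le_max_right _ _)
  -- each i has some n with ν (Y i n) > μ S / 2
  have hexists : ∀ i : ι, ∃ n, μ S / 2 < ν (Y i n) := by
    intro i
    have hae1 := ae_parseval_sum μ π w d hd hsi Γ hΓ S hSm hfund hON hμS (v i) (hvne i)
    have hae2 : ∀ᵐ x ∂ν, ∀ γ : ↥Γ, t i γ x = g i γ x := ae_all_iff.mpr fun γ => hgae i γ
    have hcover : ∀ᵐ x ∂ν, x ∈ ⋃ n, Y i n := by
      filter_upwards [hae1, hae2] with x hx1 hx2
      have hsum : Summable (fun γ : ↥Γ => t i γ x) := by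
        have h2 := hON.inner_products_summable ((π x).symm (v i))
        refine h2.congr fun γ => ?_
        simp only [ht]
        rw [coeff_twist π w (v i) x (γ : G), norm_inner_symm]
      have h12 : (1:ℝ)/2 < ∑' γ : ↥Γ, t i γ x := by
        have heq : (∑' γ : ↥Γ, t i γ x)
            = ∑' γ : ↥Γ, ‖⟪(π x).symm (v i), π (γ : G) w⟫_ℂ‖ ^ 2 :=
          tsum_congr fun γ => by
            simp only [ht]; rw [coeff_twist π w (v i) x (γ : G)]
        rw [heq, hx1, hv.1 i]
        norm_num
      obtain ⟨s₀, hs₀⟩ : ∃ s₀ : Finset ↥Γ, (1:ℝ)/2 < ∑ γ ∈ s₀, t i γ x := by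
        have h2 := hsum.hasSum
        rw [HasSum] at h2
        exact (h2.eventually (eventually_gt_nhds h12)).exists
      obtain ⟨n, hn⟩ : ∃ n, s₀ ⊆ F n := by
        refine ⟨s₀.sup emb, fun γ hγ => ?_⟩
        simp only [hF, Set.Finite.mem_toFinset, Set.mem_preimage, Set.mem_Iic]
        exact Finset.le_sup hγ
      refine Set.mem_iUnion.mpr ⟨n, ?_⟩
      simp only [hY, Set.mem_setOf_eq]
      calc (1:ℝ)/2 < ∑ γ ∈ s₀, t i γ x := hs₀
        _ = ∑ γ ∈ s₀, g i γ x := Finset.sum_congr rfl fun γ _ => hx2 γ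
        _ ≤ ∑ γ ∈ F n, g i γ x := Finset.sum_le_sum_of_subset_of_nonneg hn
            (fun γ _ _ => le_max_right _ _)
    have hbig : μ S ≤ ν (⋃ n, Y i n) := by
      have hceq : ν ((⋃ n, Y i n)ᶜ) = 0 := by
        have h0 := MeasureTheory.ae_iff.mp hcover
        simp only [Set.compl_iUnion]
        convert h0 using 2
        ext a
        simp
      calc μ S = ν Set.univ := hνuniv.symm
        _ ≤ ν (⋃ n, Y i n) + ν ((⋃ n, Y i n)ᶜ) := by
            rw [← Set.union_compl_self (⋃ n, Y i n)] at *
            exact measure_union_le _ _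
        _ = ν (⋃ n, Y i n) := by rw [hceq, add_zero]
    have hsup : ν (⋃ n, Y i n) = ⨆ n, ν (Y i n) :=
      (hYmono i).directed_le.measure_iUnion
    have hhalf : μ S / 2 < ⨆ n, ν (Y i n) := by
      calc μ S / 2 < μ S := ENNReal.half_lt_self hSpos hSfin
        _ ≤ ⨆ n, ν (Y i n) := by rw [← hsup]; exact hbig
    exact lt_iSup_iff.mp hhalf
  choose nn hnn using hexists
  -- each class {i | nn i = n} is finite
  have hclassfin : ∀ n : ℕ, Set.Finite {i : ι | nn i = n} := by
    intro n
    by_contra hinf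
    have hinf' : Set.Infinite {i : ι | nn i = n} := hinf
    obtain ⟨J, hJsub, hJcard⟩ := hinf'.exists_subset_card_eq (4 * (F n).card + 4)
    have hgood : ∀ᵐ x ∂ν, ∀ i ∈ J, ∀ γ : ↥Γ, t i γ x = g i γ x := by
      rw [show (∀ᵐ x ∂ν, ∀ i ∈ J, ∀ γ : ↥Γ, t i γ x = g i γ x)
          = ∀ᵐ x ∂ν, ∀ i ∈ (J : Set ι), ∀ γ : ↥Γ, t i γ x = g i γ x from rfl,
        ae_ball_iff J.countable_toSet]
      intro i hi
      exact ae_all_iff.mpr fun γ => hgae i γ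
    -- pointwise overlap bound via Bessel
    have hptwise : ∀ᵐ x ∂ν,
        (∑ i ∈ J, Set.indicator (Y i n) (fun _ => (1:ℝ≥0∞)) x)
          ≤ ((2 * (F n).card : ℕ) : ℝ≥0∞) := by
      filter_upwards [hgood] with x hx
      set K := J.filter (fun i => x ∈ Y i n) with hK
      have hsum : (∑ i ∈ J, Set.indicator (Y i n) (fun _ => (1:ℝ≥0∞)) x)
          = (K.card : ℝ≥0∞) := by
        rw [hK, Finset.card_filter]
        push_cast
        refine Finset.sum_congr rfl fun i hi => ?_
        by_cases hxY : x ∈ Y i n <;> simp [Set.indicator, hxY]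
      rw [hsum]
      have hONx : Orthonormal ℂ (⇑(π x).symm ∘ v) :=
        hv.comp_linearIsometryEquiv ((π x).symm)
      have hb1 : ∀ γ : ↥Γ, (∑ i ∈ K, t i γ x) ≤ 1 := by
        intro γ
        have hbl := hONx.sum_inner_products_le (s := K) (π (γ : G) w)
        have hrw : (∑ i ∈ K, t i γ x)
            = ∑ i ∈ K, ‖⟪(⇑(π x).symm ∘ v) i, π (γ : G) w⟫_ℂ‖ ^ 2 := by
          refine Finset.sum_congr rfl fun i _ => ?_
          simp only [ht, Function.comp_apply]
          rw [coeff_twist π w (v i) x (γ : G)]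
        rw [hrw]
        calc ∑ i ∈ K, ‖⟪(⇑(π x).symm ∘ v) i, π (γ : G) w⟫_ℂ‖ ^ 2
            ≤ ‖π (γ : G) w‖ ^ 2 := hbl
          _ = 1 := by rw [hON.1 γ]; norm_num
      have hb2 : (K.card : ℝ) * (1 / 2) ≤ (F n).card := by
        have hlow : ∀ i ∈ K, (1:ℝ)/2 ≤ ∑ γ ∈ F n, t i γ x := by
          intro i hiK
          have hiY : x ∈ Y i n := (Finset.mem_filter.mp hiK).2
          have hiJ : i ∈ J := (Finset.mem_filter.mp hiK).1
          simp only [hY, Set.mem_setOf_eq] at hiY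
          calc (1:ℝ)/2 ≤ ∑ γ ∈ F n, g i γ x := le_of_lt hiY
            _ = ∑ γ ∈ F n, t i γ x := Finset.sum_congr rfl fun γ _ => (hx i hiJ γ).symm
        calc (K.card : ℝ) * (1/2) = ∑ _i ∈ K, (1:ℝ)/2 := by
              rw [Finset.sum_const, nsmul_eq_mul]
          _ ≤ ∑ i ∈ K, ∑ γ ∈ F n, t i γ x := Finset.sum_le_sum hlow
          _ = ∑ γ ∈ F n, ∑ i ∈ K, t i γ x := Finset.sum_comm
          _ ≤ ∑ _γ ∈ F n, (1:ℝ) := Finset.sum_le_sum fun γ _ => hb1 γ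
          _ = (F n).card := by simp
      have hKcard : K.card ≤ 2 * (F n).card := by
        have : (K.card : ℝ) ≤ 2 * (F n).card := by linarith
        exact_mod_cast this
      exact_mod_cast Nat.cast_le.mpr hKcard
    -- integral bounds give a contradiction
    have hsum_eq : (∑ i ∈ J, ν (Y i n))
        = ∫⁻ x, (∑ i ∈ J, Set.indicator (Y i n) (fun _ => (1:ℝ≥0∞)) x) ∂ν := by
      rw [lintegral_finset_sum _ fun i _ =>
        (measurable_const.indicator (hYmeas i n))]
      refine Finset.sum_congr rfl fun i _ => ?_
      rw [lintegral_indicator (hYmeas i n)]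
      simp
    have hupper : (∑ i ∈ J, ν (Y i n)) ≤ ((2 * (F n).card : ℕ) : ℝ≥0∞) * μ S := by
      rw [hsum_eq]
      calc ∫⁻ x, (∑ i ∈ J, Set.indicator (Y i n) (fun _ => (1:ℝ≥0∞)) x) ∂ν
          ≤ ∫⁻ _x, ((2 * (F n).card : ℕ) : ℝ≥0∞) ∂ν := lintegral_mono_ae hptwise
        _ = ((2 * (F n).card : ℕ) : ℝ≥0∞) * μ S := by rw [lintegral_const, hνuniv]
    have hlower : ((4 * (F n).card + 4 : ℕ) : ℝ≥0∞) * μ S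
        ≤ 2 * ∑ i ∈ J, ν (Y i n) := by
      have hone : ∀ i ∈ J, μ S ≤ 2 * ν (Y i n) := by
        intro i hi
        have hii : nn i = n := hJsub hi
        have h1 : μ S / 2 ≤ ν (Y i n) := by
          rw [← hii]
          exact (hnn i).le
        calc μ S = 2 * (μ S / 2) := by
              rw [ENNReal.mul_div_cancel' (by norm_num) (by norm_num)]
          _ ≤ 2 * ν (Y i n) := by exact mul_le_mul_right h1 2
      calc ((4 * (F n).card + 4 : ℕ) : ℝ≥0∞) * μ S = ∑ _i ∈ J, μ S := by
            rw [Finset.sum_const, hJcard, nsmul_eq_mul]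
        _ ≤ ∑ i ∈ J, 2 * ν (Y i n) := Finset.sum_le_sum hone
        _ = 2 * ∑ i ∈ J, ν (Y i n) := by rw [Finset.mul_sum]
    have hfinal : ((4 * (F n).card + 4 : ℕ) : ℝ≥0∞) * μ S
        ≤ ((4 * (F n).card : ℕ) : ℝ≥0∞) * μ S := by
      calc ((4 * (F n).card + 4 : ℕ) : ℝ≥0∞) * μ S ≤ 2 * ∑ i ∈ J, ν (Y i n) := hlower
        _ ≤ 2 * (((2 * (F n).card : ℕ) : ℝ≥0∞) * μ S) := by
            exact mul_le_mul_right hupper 2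
        _ = ((4 * (F n).card : ℕ) : ℝ≥0∞) * μ S := by
            rw [← mul_assoc]
            congr 1
            push_cast
            ring
    have hcancel : ((4 * (F n).card + 4 : ℕ) : ℝ≥0∞) ≤ ((4 * (F n).card : ℕ) : ℝ≥0∞) :=
      (ENNReal.mul_le_mul_iff_left hSpos hSfin).mp hfinal
    have : (4 * (F n).card + 4 : ℕ) ≤ (4 * (F n).card : ℕ) := by exact_mod_cast hcancel
    omega
  -- conclude countability
  have huniv : (Set.univ : Set ι) = ⋃ n : ℕ, {i : ι | nn i = n} := by
    ext i
    simp
  have hcnt : (Set.univ : Set ι).Countable := by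
    rw [huniv]
    exact Set.countable_iUnion fun n => (hclassfin n).countable
  exact Set.countable_univ_iff.mp hcnt

lemma exists_countable_dense_subset
    (μ : Measure G) [μ.IsMulRightInvariant]
    (π : G →* (H ≃ₗᵢ[ℂ] H)) (w : H)
    (d : ℝ) (hd : 0 < d)
    (hsi : ∀ v : H, d * ∫ g, ‖⟪v, π g w⟫_ℂ‖ ^ 2 ∂μ = ‖v‖ ^ 2)
    (Γ : Set G) (hΓ : Γ.Countable)
    (S : Set G) (hSm : MeasurableSet S) (hSfin : μ S ≠ ⊤) (hSpos : μ S ≠ 0)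
    (hfund : ∀ g : G, ∃! γ : G, γ ∈ Γ ∧ g * γ⁻¹ ∈ S)
    (hON : Orthonormal ℂ (fun γ : Γ => π (γ : G) w))
    (hμS : μ S = ENNReal.ofReal (1 / d)) :
    ∃ D : Set H, D.Countable ∧ Dense D := by
  obtain ⟨W, b, hb⟩ := exists_hilbertBasis ℂ H
  have hbON : Orthonormal ℂ ((↑) : W → H) := by
    have h0 := b.orthonormal
    rwa [show ⇑b = ((↑) : W → H) from hb] at h0
  haveI : Countable ↥W := countable_of_orthonormal μ π w d hd hsi Γ hΓ S hSm hSfin hSpos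
    hfund hON hμS ((↑) : W → H) hbON
  have hWc : (W : Set H).Countable := Set.countable_coe_iff.mp ‹_›
  have hdense := b.dense_span
  rw [show ⇑b = ((↑) : W → H) from hb, Subtype.range_coe] at hdense
  have h1 : TopologicalSpace.IsSeparable (W : Set H) := hWc.isSeparable
  have h2 : TopologicalSpace.IsSeparable ((Submodule.span ℂ W : Submodule ℂ H) : Set H) :=
    h1.span
  have h3 : TopologicalSpace.IsSeparable
      (closure ((Submodule.span ℂ W : Submodule ℂ H) : Set H)) := h2.closure
  have h4 : closure ((Submodule.span ℂ W : Submodule ℂ H) : Set H) = Set.univ := by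
    have := congrArg (fun K : Submodule ℂ H => (K : Set H)) hdense
    simpa [Submodule.topologicalClosure_coe] using this
  rw [h4] at h3
  haveI : TopologicalSpace.SeparableSpace H := TopologicalSpace.isSeparable_univ_iff.mp h3
  exact TopologicalSpace.exists_countable_dense H

end OnbCovolAux

open OnbCovolAux

/-- Density lemma: let `π` be an irreducible unitary square-integrable representation of a
locally compact unimodular group `G` with formal degree `d`, `Γ` a discrete subset with
relatively compact fundamental domain `Σ` (so `G = ⊔_{γ∈Γ} Σγ`), and `w` a unit vector with
`{π(γ)w : γ ∈ Γ}` orthonormal. Then `{π(γ)w : γ ∈ Γ}` is an orthonormal basis of `H`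
if and only if `μ(Σ)⁻¹ = d`. -/
theorem onb_iff_covolume {G H : Type*} [Group G] [MeasurableSpace G] [MeasurableMul₂ G]
    [NormedAddCommGroup H] [InnerProductSpace ℂ H] [CompleteSpace H]
    (μ : Measure G) [μ.IsMulRightInvariant]
    (π : G →* (H ≃ₗᵢ[ℂ] H)) (w : H) (hw : ‖w‖ = 1)
    (d : ℝ) (hd : 0 < d)
    (hsi : ∀ v : H, d * ∫ g, ‖⟪v, π g w⟫_ℂ‖ ^ 2 ∂μ = ‖v‖ ^ 2)
    (Γ : Set G) (hΓ : Γ.Countable)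
    (Sfd : Set G) (hSm : MeasurableSet Sfd) (hSfin : μ Sfd ≠ ⊤) (hSpos : μ Sfd ≠ 0)
    (hfund : ∀ g : G, ∃! γ : G, γ ∈ Γ ∧ g * γ⁻¹ ∈ Sfd)
    (hON : Orthonormal ℂ (fun γ : Γ => π (γ : G) w)) :
    (Submodule.span ℂ (Set.range fun γ : Γ => π (γ : G) w)).topologicalClosure = ⊤ ↔
      (μ Sfd).toReal * d = 1 := by
  have hw0 : w ≠ 0 := fun h => by simp [h] at hw
  constructor
  · intro hT
    have haem : AEMeasurable (fun g => ENNReal.ofReal (‖⟪w, π g w⟫_ℂ‖ ^ 2)) μ :=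
      ((integrable_coeff μ π w d hsi w hw0).aestronglyMeasurable.aemeasurable).ennreal_ofReal
    have h1 := chain μ π w Γ hΓ Sfd hSm hfund w haem
    rw [lintegral_coeff μ π w d hd hsi w hw0] at h1
    have h2 : ∀ x : G, (∑' γ : Γ, ENNReal.ofReal (‖⟪(π x).symm w, π (γ : G) w⟫_ℂ‖ ^ 2))
        = (1 : ℝ≥0∞) := by
      intro x
      have hp := parseval_hasSum π w Γ hON hT ((π x).symm w)
      rw [← ENNReal.ofReal_tsum_of_nonneg (fun γ => by positivity) hp.summable, hp.tsum_eq,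
        LinearIsometryEquiv.norm_map, hw]
      norm_num
    simp only [h2] at h1
    rw [setLIntegral_one] at h1
    rw [hw] at h1
    norm_num at h1
    rw [← h1, ENNReal.toReal_ofReal (by positivity)]
    field_simp
  · intro hEq
    have hμS : μ Sfd = ENNReal.ofReal (1 / d) := by
      have h1 : (μ Sfd).toReal = 1 / d := by
        rw [eq_div_iff hd.ne']
        exact hEq
      rw [← h1, ENNReal.ofReal_toReal hSfin]
    have hsep : ∃ D : Set H, D.Countable ∧ Dense D :=
      exists_countable_dense_subset μ π w d hd hsi Γ hΓ Sfd hSm hSfin hSpos hfund hON hμS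
    obtain ⟨D, hDc, hDd⟩ := hsep
    haveI : Countable ↥D := hDc.to_subtype
    set M := (Submodule.span ℂ (Set.range fun γ : Γ => π (γ : G) w)).topologicalClosure
      with hM
    have hae : ∀ᵐ x ∂(μ.restrict Sfd), ∀ uu : ↥D, (π x).symm (uu : H) ∈ M :=
      ae_all_iff.mpr fun uu =>
        ae_parseval μ π w d hd hsi Γ hΓ Sfd hSm hfund hON hμS (uu : H)
    have hne : μ.restrict Sfd ≠ 0 := by
      rw [Ne, Measure.restrict_eq_zero]
      exact hSpos
    haveI : (ae (μ.restrict Sfd)).NeBot := ae_neBot.mpr hne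
    obtain ⟨x₀, hx₀⟩ := hae.exists
    refine Submodule.eq_top_iff'.mpr fun h => ?_
    have himg : ((π x₀).symm '' D : Set H) ⊆ (M : Set H) := by
      rintro _ ⟨uu, huD, rfl⟩
      exact hx₀ ⟨uu, huD⟩
    have hclosed : IsClosed (M : Set H) := Submodule.isClosed_topologicalClosure _
    have hdense : h ∈ closure ((π x₀).symm '' D : Set H) := by
      have h2 : (π x₀) h ∈ closure D := hDd _
      have h3 : h ∈ (π x₀).symm '' closure D := ⟨(π x₀) h, h2, by simp⟩
      exact image_closure_subset_closure_image (π x₀).symm.continuous h3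
    exact (closure_minimal himg hclosed) hdense
end

section
/- Under the hypotheses of the density lemma (square-integrable π, quasi-lattice Γ with fundamental domain Σ, orthonormal system {π(γ)w}), if μ(Σ)^{-1} = d_π then for every v ∈ H and almost every g ∈ Σ, ‖v‖² = Σ_{γ∈Γ} |⟨v, π(gγ)w⟩|²; i.e., the translated system {π(gγ)w : γ ∈ Γ} is a Parseval frame (in fact ONB) for almost every g. -/
open MeasureTheory
open scoped InnerProductSpace

/-- Under the hypotheses of the density lemma (square-integrable `π` with formal degree `d`,
quasi-lattice `Γ` with fundamental domain `Σ`, orthonormal system `{π(γ)w}`), if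
`μ(Σ)⁻¹ = d` then for every `v` and almost every `g ∈ Σ`,
`‖v‖² = Σ_{γ∈Γ} |⟨v, π(gγ)w⟩|²`: the translated system is a Parseval frame (in fact an
orthonormal basis) for almost every `g`. -/
theorem translated_parseval {G H : Type*} [Group G] [MeasurableSpace G] [MeasurableMul₂ G]
    [NormedAddCommGroup H] [InnerProductSpace ℂ H] [CompleteSpace H]
    (μ : Measure G) [μ.IsMulRightInvariant]
    (π : G →* (H ≃ₗᵢ[ℂ] H)) (w : H) (hw : ‖w‖ = 1)
    (d : ℝ) (hd : 0 < d)
    (hsi : ∀ v : H, d * ∫ g, ‖⟪v, π g w⟫_ℂ‖ ^ 2 ∂μ = ‖v‖ ^ 2)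
    (Γ : Set G) (hΓ : Γ.Countable)
    (Sfd : Set G) (hSm : MeasurableSet Sfd) (hSfin : μ Sfd ≠ ⊤) (hSpos : μ Sfd ≠ 0)
    (hfund : ∀ g : G, ∃! γ : G, γ ∈ Γ ∧ g * γ⁻¹ ∈ Sfd)
    (hON : Orthonormal ℂ (fun γ : Γ => π (γ : G) w))
    (hvol : (μ Sfd).toReal * d = 1) :
    ∀ v : H, ∀ᵐ g ∂(μ.restrict Sfd),
      ‖v‖ ^ 2 = ∑' γ : Γ, ‖⟪v, π (g * (γ : G)) w⟫_ℂ‖ ^ 2 := by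
  intro v
  haveI : Countable Γ := hΓ.to_subtype
  rcases eq_or_ne v 0 with rfl | hv
  · filter_upwards with g
    simp
  -- the translated families are orthonormal
  have hONg : ∀ g : G, Orthonormal ℂ (fun γ : Γ => π (g * (γ : G)) w) := by
    intro g
    have h := hON.comp_linearIsometryEquiv (π g)
    convert h using 1
    funext γ
    simp [map_mul]
  have hswap : ∀ g : G, (fun γ : Γ => ‖⟪v, π (g * (γ : G)) w⟫_ℂ‖ ^ 2)
      = fun γ : Γ => ‖⟪π (g * (γ : G)) w, v⟫_ℂ‖ ^ 2 := by
    intro g; funext γ; rw [norm_inner_symm]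
  have hbessel : ∀ g : G, ∑' γ : Γ, ‖⟪v, π (g * (γ : G)) w⟫_ℂ‖ ^ 2 ≤ ‖v‖ ^ 2 := by
    intro g
    rw [hswap g]
    exact (hONg g).tsum_inner_products_le v
  have hsummable : ∀ g : G, Summable (fun γ : Γ => ‖⟪v, π (g * (γ : G)) w⟫_ℂ‖ ^ 2) := by
    intro g
    rw [hswap g]
    exact (hONg g).inner_products_summable v
  -- the matrix coefficient function
  set F : G → ℝ := fun g => ‖⟪v, π g w⟫_ℂ‖ ^ 2 with hFdef
  have hFnn : ∀ g, 0 ≤ F g := fun g => by positivity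
  have hv2 : (0:ℝ) < ‖v‖ ^ 2 := by
    have : 0 < ‖v‖ := norm_pos_iff.mpr hv
    positivity
  have hint : Integrable F μ := by
    by_contra hni
    have h1 := hsi v
    rw [integral_undef hni, mul_zero] at h1
    exact absurd h1.symm (ne_of_gt hv2)
  have hFae : AEMeasurable F μ := hint.aemeasurable
  have hI : ∫ g, F g ∂μ = (μ Sfd).toReal * ‖v‖ ^ 2 := by
    have h1 := hsi v
    have h3 : (μ Sfd).toReal * (d * ∫ g, F g ∂μ) = (μ Sfd).toReal * ‖v‖ ^ 2 := by rw [h1]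
    calc ∫ g, F g ∂μ = ((μ Sfd).toReal * d) * ∫ g, F g ∂μ := by rw [hvol, one_mul]
      _ = (μ Sfd).toReal * ‖v‖ ^ 2 := by rw [mul_assoc, h3]
  have hlintF : ∫⁻ g, ENNReal.ofReal (F g) ∂μ
      = ENNReal.ofReal ((μ Sfd).toReal * ‖v‖ ^ 2) := by
    rw [← ofReal_integral_eq_lintegral_ofReal hint (ae_of_all _ hFnn), hI]
  -- the tiling sets
  set A : Γ → Set G := fun γ => (fun g => g * (γ : G)⁻¹) ⁻¹' Sfd with hAdef
  have hAm : ∀ γ : Γ, MeasurableSet (A γ) := fun γ => (measurable_mul_const ((γ:G)⁻¹)) hSm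
  have hcover : ⋃ γ : Γ, A γ = Set.univ := by
    ext g
    simp only [Set.mem_iUnion, Set.mem_univ, iff_true]
    obtain ⟨γ, ⟨hγΓ, hγS⟩, -⟩ := hfund g
    exact ⟨⟨γ, hγΓ⟩, hγS⟩
  have hdisj : Pairwise (Function.onFun Disjoint A) := by
    intro γ₁ γ₂ hne
    rw [Function.onFun, Set.disjoint_left]
    intro g h1 h2
    obtain ⟨γ, -, huniq⟩ := hfund g
    exact hne (Subtype.ext ((huniq γ₁ ⟨γ₁.2, h1⟩).trans (huniq γ₂ ⟨γ₂.2, h2⟩).symm))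
  have htile : ∫⁻ g, ENNReal.ofReal (F g) ∂μ
      = ∑' γ : Γ, ∫⁻ g in A γ, ENNReal.ofReal (F g) ∂μ := by
    rw [← setLIntegral_univ, ← hcover, lintegral_iUnion hAm hdisj]
  have hchange : ∀ γ : Γ, ∫⁻ g in A γ, ENNReal.ofReal (F g) ∂μ
      = ∫⁻ g in Sfd, ENNReal.ofReal (F (g * (γ : G))) ∂μ := by
    intro γ
    have hemb : MeasurableEmbedding (fun g : G => g * (γ : G)) :=
      (MeasurableEquiv.mulRight (γ : G)).measurableEmbedding
    have hmp := measurePreserving_mul_right μ (γ : G)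
    have hkey := hmp.setLIntegral_comp_preimage_emb hemb (fun g => ENNReal.ofReal (F g)) (A γ)
    have hseq : (fun g : G => g * (γ : G)) ⁻¹' (A γ) = Sfd := by
      ext g
      simp [hAdef, mul_inv_cancel_right]
    rw [← hkey, hseq]
  -- the Bessel sum function
  set S : G → ENNReal := fun g => ∑' γ : Γ, ENNReal.ofReal (F (g * (γ : G))) with hSdef
  have hFγ : ∀ γ : Γ, AEMeasurable (fun g => ENNReal.ofReal (F (g * (γ : G)))) μ := by
    intro γ
    exact ENNReal.measurable_ofReal.comp_aemeasurable
      (hFae.comp_quasiMeasurePreserving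
        (measurePreserving_mul_right μ (γ : G)).quasiMeasurePreserving)
  have hlintS : ∫⁻ g in Sfd, S g ∂(μ) = ENNReal.ofReal ((μ Sfd).toReal * ‖v‖ ^ 2) := by
    rw [hSdef]
    rw [lintegral_tsum fun γ => (hFγ γ).restrict]
    calc (∑' γ : Γ, ∫⁻ g in Sfd, ENNReal.ofReal (F (g * (γ : G))) ∂μ)
        = ∑' γ : Γ, ∫⁻ g in A γ, ENNReal.ofReal (F g) ∂μ :=
          tsum_congr fun γ => (hchange γ).symm
      _ = ∫⁻ g, ENNReal.ofReal (F g) ∂μ := htile.symm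
      _ = ENNReal.ofReal ((μ Sfd).toReal * ‖v‖ ^ 2) := hlintF
  have hSg : ∀ g : G, S g = ENNReal.ofReal (∑' γ : Γ, F (g * (γ : G))) := fun g =>
    (ENNReal.ofReal_tsum_of_nonneg (fun γ => hFnn _) (hsummable g)).symm
  have hSle : ∀ g : G, S g ≤ ENNReal.ofReal (‖v‖ ^ 2) := by
    intro g
    rw [hSg g]
    exact ENNReal.ofReal_le_ofReal (hbessel g)
  have hconst : ∫⁻ _ in Sfd, ENNReal.ofReal (‖v‖ ^ 2) ∂μ
      = ENNReal.ofReal ((μ Sfd).toReal * ‖v‖ ^ 2) := by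
    rw [setLIntegral_const, ENNReal.ofReal_mul ENNReal.toReal_nonneg,
      ENNReal.ofReal_toReal hSfin, mul_comm]
  have hae : S =ᵐ[μ.restrict Sfd] fun _ => ENNReal.ofReal (‖v‖ ^ 2) := by
    refine ae_eq_of_ae_le_of_lintegral_le (ae_of_all _ hSle) ?_ aemeasurable_const ?_
    · rw [hlintS]; exact ENNReal.ofReal_ne_top
    · rw [hlintS, hconst]
  filter_upwards [hae] with g hg
  rw [hSg g] at hg
  exact ((ENNReal.ofReal_eq_ofReal_iff (tsum_nonneg fun γ => hFnn _) (le_of_lt hv2)).mp hg).symm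
end

section
/- Let G be a connected simply connected nilpotent Lie group with Lie algebra g and strong Malcev basis (X_1,…,X_n), and define φ(t_1,…,t_n) = exp(t_1 X_1)⋯exp(t_n X_n). Then Γ = {φ(k) : k ∈ ℤ^n} is a quasi-lattice in G: every g ∈ G has a unique representation g = exp(t_n X_n)⋯exp(t_1 X_1)·γ with t_1,…,t_n ∈ [0,1) and γ ∈ Γ. -/
private lemma list_prod_ofFn_single {M : Type*} [Monoid M] : ∀ {n : ℕ} (f : Fin n → M) (i : Fin n),
    (∀ j, j ≠ i → f j = 1) → (List.ofFn f).prod = f i := by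
  intro n
  induction n with
  | zero => exact fun f i => i.elim0
  | succ n IH =>
    intro f i h
    rw [List.ofFn_succ, List.prod_cons]
    rcases Fin.eq_zero_or_eq_succ i with rfl | ⟨j, rfl⟩
    · have h1 : (List.ofFn fun k : Fin n => f k.succ).prod = 1 := by
        apply List.prod_eq_one
        intro x hx
        rw [List.mem_ofFn] at hx
        obtain ⟨k, rfl⟩ := hx
        exact h _ (Fin.succ_ne_zero k)
      rw [h1, mul_one]
    · have h0 : f 0 = 1 := h 0 (Fin.succ_ne_zero j).symm
      rw [h0, one_mul]
      exact IH (fun k => f k.succ) j (fun k hk => h k.succ (by simpa [Fin.succ_inj] using hk))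

private theorem malcev_aux : ∀ (n : ℕ) {G : Type u} [Group G]
    (e : Fin n → ℝ → G)
    (hone : ∀ (i : Fin n) (s t : ℝ), e i (s + t) = e i s * e i t)
    (φ : (Fin n → ℝ) → G)
    (hφ : ∀ t, φ t = (List.ofFn fun i => e i (t i)).prod)
    (hbij : Function.Bijective φ)
    (hideal : ∀ m : ℕ, ∃ H : Subgroup G, H.Normal ∧
      (H : Set G) = φ '' {t : Fin n → ℝ | ∀ j : Fin n, m ≤ (j : ℕ) → t j = 0}),
    ∀ g : G, ∃! p : (Fin n → ℝ) × (Fin n → ℤ),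
      (∀ i, p.1 i ∈ Set.Ico (0 : ℝ) 1) ∧
      g = (List.ofFn fun i => e i (p.1 i)).reverse.prod * φ (fun i => (p.2 i : ℝ)) := by
  intro n
  induction n with
  | zero =>
    intro G _ e hone φ hφ hbij hideal g
    obtain ⟨u, hu⟩ := hbij.2 g
    refine ⟨(default, default), ⟨fun i => i.elim0, ?_⟩, fun y hy => Subsingleton.elim _ _⟩
    simp only [List.ofFn_zero, List.reverse_nil, List.prod_nil, one_mul]
    calc g = φ u := hu.symm
      _ = _ := congrArg φ (Subsingleton.elim _ _)
  | succ n IH =>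
    intro G _ e hone φ hφ hbij hideal g
    have he0 : ∀ i, e i 0 = 1 := fun i => by
      have h := hone i 0 0
      rw [add_zero] at h
      exact left_eq_mul.mp h
    -- product formula for snoc
    have hφsnoc : ∀ (t : Fin n → ℝ) (s : ℝ),
        φ (Fin.snoc t s) = (List.ofFn fun i : Fin n => e i.castSucc (t i)).prod * e (Fin.last n) s := by
      intro t s
      rw [hφ, List.ofFn_succ', List.concat_eq_append, List.prod_append]
      simp
    obtain ⟨H, hHnorm, hHcar⟩ := hideal n
    have hpadmem : ∀ t : Fin n → ℝ, φ (Fin.snoc t 0) ∈ H := by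
      intro t
      rw [← SetLike.mem_coe, hHcar]
      refine ⟨Fin.snoc t 0, ?_, rfl⟩
      intro j hj
      have hjL : j = (Fin.last n) := Fin.ext (le_antisymm (Nat.lt_succ_iff.mp j.isLt) hj)
      rw [hjL]
      exact Fin.snoc_last _ _
    have hHmem_iff : ∀ x : G, x ∈ H ↔ ∃ t : Fin n → ℝ, φ (Fin.snoc t 0) = x := by
      intro x
      constructor
      · intro hx
        rw [← SetLike.mem_coe, hHcar] at hx
        obtain ⟨u, hu, rfl⟩ := hx
        refine ⟨fun i => u i.castSucc, ?_⟩
        congr 1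
        funext j
        refine Fin.lastCases ?_ (fun i => ?_) j
        · rw [Fin.snoc_last]
          exact (hu (Fin.last n) le_rfl).symm
        · rw [Fin.snoc_castSucc]
      · rintro ⟨t, rfl⟩
        exact hpadmem t
    -- the smaller group
    have hememH : ∀ (i : Fin n) (s : ℝ), e i.castSucc s ∈ H := by
      intro i s
      have key : φ (Fin.snoc (fun j => if j = i then s else 0) 0) = e i.castSucc s := by
        rw [hφsnoc, he0, mul_one]
        have h2 := list_prod_ofFn_single
          (fun j => e j.castSucc (if j = i then s else 0)) i ?_
        · simpa using h2
        · intro j hj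
          simp [hj, he0]
      rw [← key]
      exact hpadmem _
    set e' : Fin n → ℝ → H := fun i s => ⟨e i.castSucc s, hememH i s⟩ with he'def
    set φ' : (Fin n → ℝ) → H := fun t => ⟨φ (Fin.snoc t 0), hpadmem t⟩ with hφ'def
    have hone' : ∀ (i : Fin n) (s t : ℝ), e' i (s + t) = e' i s * e' i t :=
      fun i s t => Subtype.ext (hone i.castSucc s t)
    have hcoeprod : ∀ v : Fin n → H,
        (((List.ofFn v).prod : H) : G) = (List.ofFn fun i => (v i : G)).prod := by
      intro v
      rw [← Subgroup.coe_subtype, map_list_prod, List.map_ofFn]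
      rfl
    have hcoerev : ∀ v : Fin n → H,
        (((List.ofFn v).reverse.prod : H) : G) = (List.ofFn fun i => (v i : G)).reverse.prod := by
      intro v
      rw [← Subgroup.coe_subtype, map_list_prod, List.map_reverse, List.map_ofFn]
      rfl
    have hφ'eq : ∀ t, φ' t = (List.ofFn fun i => e' i (t i)).prod := by
      intro t
      apply Subtype.ext
      rw [hcoeprod]
      show φ (Fin.snoc t 0) = _
      rw [hφsnoc, he0, mul_one]
    have hbij' : Function.Bijective φ' := by
      constructor
      · intro a b hab
        have h1 : φ (Fin.snoc a 0) = φ (Fin.snoc b 0) := congrArg Subtype.val hab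
        have h2 := hbij.1 h1
        funext i
        have := congrFun h2 i.castSucc
        simpa using this
      · intro x
        obtain ⟨t, ht⟩ := (hHmem_iff x).mp x.2
        exact ⟨t, Subtype.ext ht⟩
    have hideal' : ∀ m : ℕ, ∃ H' : Subgroup H, H'.Normal ∧
        (H' : Set H) = φ' '' {t : Fin n → ℝ | ∀ j : Fin n, m ≤ (j : ℕ) → t j = 0} := by
      intro m
      rcases le_or_gt m n with hm | hm
      · obtain ⟨K, hKnorm, hKcar⟩ := hideal m
        refine ⟨K.subgroupOf H, hKnorm.subgroupOf H, ?_⟩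
        ext x
        simp only [SetLike.mem_coe, Subgroup.mem_subgroupOf, Set.mem_image, Set.mem_setOf_eq]
        constructor
        · intro hx
          have hx' : (x : G) ∈ (K : Set G) := hx
          rw [hKcar] at hx'
          obtain ⟨u, hu, hux⟩ := hx'
          refine ⟨fun i => u i.castSucc, fun j hj => hu j.castSucc (by simpa using hj), ?_⟩
          apply Subtype.ext
          rw [← hux]
          show φ _ = φ u
          congr 1
          funext j
          refine Fin.lastCases ?_ (fun i => ?_) j
          · rw [Fin.snoc_last]
            exact (hu (Fin.last n) (le_trans hm le_rfl)).symm
          · rw [Fin.snoc_castSucc]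
        · rintro ⟨t, ht, rfl⟩
          show φ (Fin.snoc t 0) ∈ K
          rw [← SetLike.mem_coe, hKcar]
          refine ⟨Fin.snoc t 0, ?_, rfl⟩
          intro j
          refine Fin.lastCases ?_ (fun i => ?_) j
          · intro _
            exact Fin.snoc_last _ _
          · intro hi
            rw [Fin.snoc_castSucc]
            exact ht i (by simpa using hi)
      · refine ⟨⊤, inferInstance, ?_⟩
        have hset : {t : Fin n → ℝ | ∀ j : Fin n, m ≤ (j : ℕ) → t j = 0} = Set.univ := by
          ext t
          simp only [Set.mem_setOf_eq, Set.mem_univ, iff_true]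
          intro j hj
          exact absurd hj (by omega)
        rw [hset, Set.image_univ, Set.range_eq_univ.mpr hbij'.2]
        rfl
    -- decompose g
    obtain ⟨u, hu⟩ := hbij.2 g
    set u' : Fin n → ℝ := fun i => u i.castSucc with hu'def
    set s : ℝ := u (Fin.last n) with hsdef
    have husnoc : u = Fin.snoc u' s := by
      funext j
      refine Fin.lastCases ?_ (fun i => ?_) j
      · rw [Fin.snoc_last]
      · rw [Fin.snoc_castSucc]
    set tn : ℝ := Int.fract s with htndef
    set kn : ℤ := ⌊s⌋ with hkndef
    have hsplit : e (Fin.last n) s = e (Fin.last n) tn * e (Fin.last n) (kn : ℝ) := by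
      rw [← hone]
      congr 1
      exact (Int.fract_add_floor s).symm
    set a : G := e (Fin.last n) tn with hadef
    have h0H : a⁻¹ * φ (Fin.snoc u' 0) * a ∈ H := by
      have := hHnorm.conj_mem _ (hpadmem u') a⁻¹
      simpa using this
    obtain ⟨⟨t', k'⟩, ⟨ht'Ico, hdec⟩, huniq⟩ :=
      IH e' hone' φ' hφ'eq hbij' hideal' ⟨a⁻¹ * φ (Fin.snoc u' 0) * a, h0H⟩
    -- coe version of hdec
    have hdecG : a⁻¹ * φ (Fin.snoc u' 0) * a =
        (List.ofFn fun i => e i.castSucc (t' i)).reverse.prod *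
          φ (Fin.snoc (fun i => (k' i : ℝ)) 0) := by
      have := congrArg Subtype.val hdec
      simp only at this
      rw [this]
      show (((List.ofFn fun i => e' i (t' i)).reverse.prod * φ' fun i => (k' i : ℝ) : H) : G) = _
      push_cast [hcoerev]
      rfl
    -- general reverse-prod formula
    have hrev : ∀ f : Fin (n + 1) → G, (List.ofFn f).reverse.prod =
        f (Fin.last n) * (List.ofFn fun i : Fin n => f i.castSucc).reverse.prod := by
      intro f
      rw [List.ofFn_succ', List.concat_eq_append, List.reverse_append]
      simp
    -- candidate
    refine ⟨(Fin.snoc t' tn, Fin.snoc k' kn), ⟨?_, ?_⟩, ?_⟩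
    · intro i
      refine Fin.lastCases ?_ (fun j => ?_) i
      · simpa using ⟨Int.fract_nonneg s, Int.fract_lt_one s⟩
      · simpa using ht'Ico j
    · -- existence equation
      have hcast : (fun i : Fin (n+1) => ((Fin.snoc k' kn : Fin (n+1) → ℤ) i : ℝ)) =
          Fin.snoc (fun i => (k' i : ℝ)) (kn : ℝ) := by
        funext j
        refine Fin.lastCases ?_ (fun i => ?_) j <;> simp
      show g = _
      rw [hrev, hcast, hφsnoc]
      simp only [Fin.snoc_last, Fin.snoc_castSucc]
      have hφk : (List.ofFn fun i : Fin n => e i.castSucc ((k' i : ℝ))).prod =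
          φ (Fin.snoc (fun i => (k' i : ℝ)) 0) := by
        rw [hφsnoc, he0, mul_one]
      rw [hφk]
      calc g = φ u := hu.symm
        _ = φ (Fin.snoc u' s) := by rw [← husnoc]
        _ = φ (Fin.snoc u' 0) * e (Fin.last n) s := by rw [hφsnoc, hφsnoc, he0, mul_one]
        _ = φ (Fin.snoc u' 0) * (a * e (Fin.last n) (kn : ℝ)) := by rw [hsplit]
        _ = a * (a⁻¹ * φ (Fin.snoc u' 0) * a) * e (Fin.last n) (kn : ℝ) := by group
        _ = a * ((List.ofFn fun i => e i.castSucc (t' i)).reverse.prod *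
              φ (Fin.snoc (fun i => (k' i : ℝ)) 0)) * e (Fin.last n) (kn : ℝ) := by rw [hdecG]
        _ = _ := by group; rfl
    · -- uniqueness
      rintro ⟨t, k⟩ ⟨htIco, heq⟩
      have hQtmem : (List.ofFn fun i : Fin n => e i.castSucc (t i.castSucc)).reverse.prod ∈ H := by
        apply Subgroup.list_prod_mem
        intro x hx
        rw [List.mem_reverse, List.mem_ofFn] at hx
        obtain ⟨i, rfl⟩ := hx
        exact hememH i _
      set Qt : G := (List.ofFn fun i : Fin n => e i.castSucc (t i.castSucc)).reverse.prod
        with hQtdef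
      have hkcast : (fun i : Fin (n+1) => ((k i : ℤ) : ℝ)) =
          Fin.snoc (fun i : Fin n => (k i.castSucc : ℝ)) ((k (Fin.last n) : ℤ) : ℝ) := by
        funext j
        refine Fin.lastCases ?_ (fun i => ?_) j <;> simp
      have heq2 : g = e (Fin.last n) (t (Fin.last n)) * (Qt * φ (Fin.snoc (fun i : Fin n => (k i.castSucc : ℝ)) 0)) *
          e (Fin.last n) ((k (Fin.last n) : ℤ) : ℝ) := by
        rw [heq, hrev, hkcast, hφsnoc]
        simp only [Fin.snoc_last, Fin.snoc_castSucc]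
        have : (List.ofFn fun i : Fin n => e i.castSucc ((k i.castSucc : ℝ))).prod =
            φ (Fin.snoc (fun i : Fin n => (k i.castSucc : ℝ)) 0) := by
          rw [hφsnoc, he0, mul_one]
        rw [this, hQtdef]
        group
      set h1 : G := Qt * φ (Fin.snoc (fun i : Fin n => (k i.castSucc : ℝ)) 0) with hh1def
      have h1mem : h1 ∈ H := H.mul_mem hQtmem (hpadmem _)
      have hconjmem : e (Fin.last n) (t (Fin.last n)) * h1 * (e (Fin.last n) (t (Fin.last n)))⁻¹ ∈ H := hHnorm.conj_mem _ h1mem _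
      obtain ⟨w, hw⟩ := (hHmem_iff _).mp hconjmem
      have hgw : g = φ (Fin.snoc w (t (Fin.last n) + (k (Fin.last n) : ℝ))) := by
        rw [hφsnoc]
        have hw0 : (List.ofFn fun i => e i.castSucc (w i)).prod = φ (Fin.snoc w 0) := by
          rw [hφsnoc, he0, mul_one]
        rw [hw0, hw, hone]
        calc g = e (Fin.last n) (t (Fin.last n)) * h1 * e (Fin.last n) ((k (Fin.last n) : ℤ) : ℝ) := heq2
          _ = e (Fin.last n) (t (Fin.last n)) * h1 * (e (Fin.last n) (t (Fin.last n)))⁻¹ * (e (Fin.last n) (t (Fin.last n)) * e (Fin.last n) ((k (Fin.last n) : ℤ) : ℝ)) := by group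
      have hueq : Fin.snoc w (t (Fin.last n) + (k (Fin.last n) : ℝ)) = u := by
        apply hbij.1
        rw [← hgw, hu]
      have hwu : w = u' := by
        funext i
        have := congrFun hueq i.castSucc
        simpa [hu'def] using this
      have hskl : t (Fin.last n) + (k (Fin.last n) : ℝ) = s := by
        have := congrFun hueq (Fin.last n)
        rw [hsdef]
        simpa using this
      have htL : t (Fin.last n) = tn := by
        rw [htndef, ← hskl]
        rw [show t (Fin.last n) + (k (Fin.last n) : ℝ) = t (Fin.last n) + ((k (Fin.last n) : ℤ) : ℝ) from rfl, Int.fract_add_intCast]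
        exact (Int.fract_eq_self.mpr ⟨(htIco (Fin.last n)).1, (htIco (Fin.last n)).2⟩).symm
      have hkL : k (Fin.last n) = kn := by
        have : ((k (Fin.last n) : ℤ) : ℝ) = (kn : ℝ) := by
          have h1 : (kn : ℝ) = s - tn := by
            rw [htndef, hkndef]
            have := Int.fract_add_floor s
            linarith
          rw [h1, ← hskl, ← htL]
          ring
        exact_mod_cast this
      -- identify h1 with the conjugate
      have hh1 : h1 = a⁻¹ * φ (Fin.snoc u' 0) * a := by
        have hga : g = φ (Fin.snoc u' 0) * (a * e (Fin.last n) ((kn : ℤ) : ℝ)) := by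
          calc g = φ (Fin.snoc u' s) := by rw [← husnoc, hu]
            _ = φ (Fin.snoc u' 0) * e (Fin.last n) s := by rw [hφsnoc, hφsnoc, he0, mul_one]
            _ = _ := by rw [hsplit]
        have hgb : g = a * h1 * e (Fin.last n) ((kn : ℤ) : ℝ) := by
          rw [heq2, htL, hkL]
        have hcancel : φ (Fin.snoc u' 0) * (a * e (Fin.last n) ((kn : ℤ) : ℝ)) =
            a * h1 * e (Fin.last n) ((kn : ℤ) : ℝ) := by rw [← hga, ← hgb]
        have h2 : φ (Fin.snoc u' 0) * a = a * h1 := by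
          apply mul_right_cancel (b := e (Fin.last n) ((kn : ℤ) : ℝ))
          rw [mul_assoc, ← hga, hgb]
        calc h1 = a⁻¹ * (a * h1) := by group
          _ = a⁻¹ * (φ (Fin.snoc u' 0) * a) := by rw [h2]
          _ = _ := by group
      -- apply uniqueness in H
      have hp2 := huniq (fun i => t i.castSucc, fun i => k i.castSucc)
        ⟨fun i => htIco i.castSucc, ?_⟩
      · have ht'eq : (fun i : Fin n => t i.castSucc) = t' := congrArg Prod.fst hp2
        have hk'eq : (fun i : Fin n => k i.castSucc) = k' := congrArg Prod.snd hp2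
        refine Prod.ext ?_ ?_
        · show t = Fin.snoc t' tn
          funext j
          refine Fin.lastCases ?_ (fun i => ?_) j
          · rw [Fin.snoc_last]; exact htL
          · rw [Fin.snoc_castSucc, ← ht'eq]
        · show k = Fin.snoc k' kn
          funext j
          refine Fin.lastCases ?_ (fun i => ?_) j
          · rw [Fin.snoc_last]; exact hkL
          · rw [Fin.snoc_castSucc, ← hk'eq]
      · apply Subtype.ext
        show a⁻¹ * φ (Fin.snoc u' 0) * a = _
        rw [← hh1, hh1def]
        show h1 = (((List.ofFn fun i => e' i (t i.castSucc)).reverse.prod *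
          φ' fun i => ((k i.castSucc : ℤ) : ℝ) : H) : G)
        push_cast [hcoerev]
        rfl


/-- Quasi-lattice from a strong Malcev basis: let `G` be a (connected simply connected
nilpotent Lie) group with one-parameter subgroups `e i` coming from a strong Malcev basis
`(X_1,…,X_n)` — i.e. the coordinate map `φ(t) = exp(t_1X_1)⋯exp(t_nX_n)` is bijective and
for each `m` the set `exp(span(X_1,…,X_m))` is a normal subgroup. Then every `g ∈ G` has a
unique representation `g = exp(t_nX_n)⋯exp(t_1X_1)·γ` with `t ∈ [0,1)^n` and
`γ ∈ Γ = {exp(k_1X_1)⋯exp(k_nX_n) : k ∈ ℤ^n}`. -/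
theorem malcev_quasi_lattice {G : Type*} [Group G] (n : ℕ)
    (e : Fin n → ℝ → G)
    (hone : ∀ (i : Fin n) (s t : ℝ), e i (s + t) = e i s * e i t)
    (φ : (Fin n → ℝ) → G)
    (hφ : ∀ t, φ t = (List.ofFn fun i => e i (t i)).prod)
    (hbij : Function.Bijective φ)
    (hideal : ∀ m : ℕ, ∃ H : Subgroup G, H.Normal ∧
      (H : Set G) = φ '' {t : Fin n → ℝ | ∀ j : Fin n, m ≤ (j : ℕ) → t j = 0}) :
    ∀ g : G, ∃! p : (Fin n → ℝ) × (Fin n → ℤ),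
      (∀ i, p.1 i ∈ Set.Ico (0 : ℝ) 1) ∧
      g = (List.ofFn fun i => e i (p.1 i)).reverse.prod * φ (fun i => (p.2 i : ℝ)) := by
  exact fun g => malcev_aux n e hone φ hφ hbij hideal g
end

section
/- Let G be a connected simply connected nilpotent Lie group, Γ ⊆ G a quasi-lattice with fundamental domain Σ constructed from a strong Malcev basis passing through an ideal n of g, N = exp(n), and pr: G → N\G the quotient map. Then pr(Γ) is a quasi-lattice in N\G with fundamental domain pr(Σ). -/
namespace MQLQ

variable {M : Type*} [Monoid M]

lemma drop_prod_of_tail_one (l : List M) (m : ℕ) (hm : m < l.length)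
    (h : ∀ (j : ℕ) (hj : j < l.length), m < j → l[j] = 1) :
    (l.drop m).prod = l[m] ∧ (l.drop m).reverse.prod = l[m] := by
  have hd : l.drop m = l[m] :: l.drop (m+1) := List.drop_eq_getElem_cons hm
  have h1 : ∀ x ∈ l.drop (m+1), x = 1 := by
    intro x hx
    rw [List.mem_iff_getElem] at hx
    obtain ⟨i, hi, rfl⟩ := hx
    rw [List.getElem_drop]
    exact h _ (by simp at hi; omega) (by omega)
  have h1r : ∀ x ∈ (l.drop (m+1)).reverse, x = 1 := fun x hx => h1 x (List.mem_reverse.mp hx)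
  constructor
  · rw [hd, List.prod_cons, List.prod_eq_one h1, mul_one]
  · rw [hd, List.reverse_cons, List.prod_append, List.prod_eq_one h1r, List.prod_cons,
      List.prod_nil, one_mul, mul_one]

lemma split_at {n : ℕ} (f : Fin n → M) (m : ℕ) :
    (List.ofFn f).prod
      = (List.ofFn fun j => if (j:ℕ) < m then f j else 1).prod * ((List.ofFn f).drop m).prod
    ∧ (List.ofFn f).reverse.prod
      = ((List.ofFn f).drop m).reverse.prod
          * (List.ofFn fun j => if (j:ℕ) < m then f j else 1).reverse.prod := by
  set l := List.ofFn f with hl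
  set l' := List.ofFn (fun j => if (j:ℕ) < m then f j else 1) with hl'
  have hlen : l.length = n := by simp [hl]
  have hlen' : l'.length = n := by simp [hl']
  have htake : l.take m = l'.take m := by
    apply List.ext_getElem
    · simp [hl, hl']
    · intro i h1 h2
      have him : i < m := by simp at h1; omega
      rw [List.getElem_take, List.getElem_take]
      simp [l, l', List.getElem_ofFn, him]
  have hdropone : ∀ x ∈ l'.drop m, x = 1 := by
    intro x hx
    rw [List.mem_iff_getElem] at hx
    obtain ⟨i, hi, rfl⟩ := hx
    rw [List.getElem_drop]
    have hmi : ¬ (m + i < m) := by omega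
    simp [l', List.getElem_ofFn, hmi]
  have e1 : l.prod = (l.take m).prod * (l.drop m).prod := by
    conv_lhs => rw [← List.take_append_drop m l]
    rw [List.prod_append]
  have e1' : l'.prod = (l.take m).prod := by
    conv_lhs => rw [← List.take_append_drop m l']
    rw [List.prod_append, List.prod_eq_one hdropone, mul_one, htake]
  have e2 : l.reverse.prod = (l.drop m).reverse.prod * (l.take m).reverse.prod := by
    conv_lhs => rw [← List.take_append_drop m l]
    rw [List.reverse_append, List.prod_append]
  have e2' : l'.reverse.prod = (l.take m).reverse.prod := by
    conv_lhs => rw [← List.take_append_drop m l']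
    rw [List.reverse_append, List.prod_append, List.prod_eq_one
      (fun x hx => hdropone x (List.mem_reverse.mp hx)), one_mul, htake]
  exact ⟨by rw [e1, e1'], by rw [e2, e2']⟩

end MQLQ

namespace MQLQ2

open MQLQ

variable {G : Type*} [Group G] {n : ℕ} (e : Fin n → ℝ → G) (φ : (Fin n → ℝ) → G)

/-- truncation: zero out coordinates `≥ m`. -/
def trunc (m : ℕ) (t : Fin n → ℝ) : Fin n → ℝ := fun j => if (j:ℕ) < m then t j else 0

variable (hone : ∀ (i : Fin n) (s t : ℝ), e i (s + t) = e i s * e i t)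
variable (hφ : ∀ t, φ t = (List.ofFn fun i => e i (t i)).prod)

include hone in
lemma e_zero (i : Fin n) : e i 0 = 1 := by
  have h := hone i 0 0
  rw [add_zero] at h
  exact (left_eq_mul.mp h)

include hone hφ in
lemma phi_zero : φ (fun _ => (0:ℝ)) = 1 := by
  rw [hφ]
  exact List.prod_eq_one (by
    intro x hx
    rw [List.mem_ofFn] at hx
    obtain ⟨i, rfl⟩ := hx
    exact e_zero e hone i)

include hone hφ in
lemma phi_split_at (m : ℕ) (t : Fin n → ℝ) :
    φ t = φ (trunc m t) * ((List.ofFn fun i => e i (t i)).drop m).prod := by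
  have hfn : (fun j : Fin n => if (j:ℕ) < m then e j (t j) else 1)
      = fun i => e i (trunc m t i) := by
    funext j
    by_cases hj : (j:ℕ) < m <;> simp [trunc, hj, e_zero e hone]
  rw [hφ t, hφ (trunc m t), (split_at (fun i => e i (t i)) m).1, ← hfn]

include hone hφ in
lemma rev_split_at (m : ℕ) (t : Fin n → ℝ) :
    (List.ofFn fun i => e i (t i)).reverse.prod
      = ((List.ofFn fun i => e i (t i)).drop m).reverse.prod
          * (List.ofFn fun i => e i (trunc m t i)).reverse.prod := by
  have hfn : (fun j : Fin n => if (j:ℕ) < m then e j (t j) else 1)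
      = fun i => e i (trunc m t i) := by
    funext j
    by_cases hj : (j:ℕ) < m <;> simp [trunc, hj, e_zero e hone]
  rw [(split_at (fun i => e i (t i)) m).2, ← hfn]

include hone in
lemma drop_single (m : Fin n) (t : Fin n → ℝ) (h : ∀ j : Fin n, (m:ℕ) < (j:ℕ) → t j = 0) :
    ((List.ofFn fun i => e i (t i)).drop (m:ℕ)).prod = e m (t m)
    ∧ ((List.ofFn fun i => e i (t i)).drop (m:ℕ)).reverse.prod = e m (t m) := by
  have hm : (m:ℕ) < (List.ofFn fun i => e i (t i)).length := by simp [m.isLt]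
  have h1 : ∀ (j : ℕ) (hj : j < (List.ofFn fun i => e i (t i)).length),
      (m:ℕ) < j → (List.ofFn fun i => e i (t i))[j] = 1 := by
    intro j hj hmj
    rw [List.getElem_ofFn]
    rw [h ⟨j, by simpa using hj⟩ hmj]
    exact e_zero e hone _
  have := drop_prod_of_tail_one (List.ofFn fun i => e i (t i)) (m:ℕ) hm h1
  rwa [List.getElem_ofFn, Fin.eta] at this

include hone hφ in
lemma phi_split (m : Fin n) (t : Fin n → ℝ) (h : ∀ j : Fin n, (m:ℕ) < (j:ℕ) → t j = 0) :
    φ t = φ (trunc (m:ℕ) t) * e m (t m) := by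
  rw [phi_split_at e φ hone hφ (m:ℕ) t, (drop_single e hone m t h).1]

include hone hφ in
lemma rev_split (m : Fin n) (t : Fin n → ℝ) (h : ∀ j : Fin n, (m:ℕ) < (j:ℕ) → t j = 0) :
    (List.ofFn fun i => e i (t i)).reverse.prod
      = e m (t m) * (List.ofFn fun i => e i (trunc (m:ℕ) t i)).reverse.prod := by
  rw [rev_split_at e φ hone hφ (m:ℕ) t, (drop_single e hone m t h).2]

include hone hφ in
lemma phi_mul_e (m : Fin n) (u : Fin n → ℝ) (hu : ∀ j : Fin n, (m:ℕ) ≤ (j:ℕ) → u j = 0) (s : ℝ) :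
    φ (fun j => if j = m then s else u j) = φ u * e m s := by
  set v : Fin n → ℝ := fun j => if j = m then s else u j with hv
  have hvt : ∀ j : Fin n, (m:ℕ) < (j:ℕ) → v j = 0 := by
    intro j hj
    have hjm : j ≠ m := by
      intro hh; rw [hh] at hj; omega
    simp [hv, hjm, hu j (le_of_lt hj)]
  have h1 : trunc (m:ℕ) v = u := by
    funext j
    by_cases hj : (j:ℕ) < (m:ℕ)
    · have hjm : j ≠ m := by
        intro hh; rw [hh] at hj; omega
      simp [trunc, hj, hv, hjm]
    · simp [trunc, hj, hu j (by omega)]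
  have h2 : v m = s := by simp [hv]
  rw [phi_split e φ hone hφ m v hvt, h1, h2]

include hone hφ in
lemma phi_single (m : Fin n) (s : ℝ) :
    φ (fun j => if j = m then s else 0) = e m s := by
  have := phi_mul_e e φ hone hφ m (fun _ => 0) (fun _ _ => rfl) s
  rwa [phi_zero e φ hone hφ, one_mul] at this

include hone hφ in
lemma rev_mem (H : Subgroup G) (m : ℕ) (hH : ∀ (i : Fin n) (s : ℝ), (i:ℕ) < m → e i s ∈ H)
    (t : Fin n → ℝ) (ht : ∀ j : Fin n, m ≤ (j:ℕ) → t j = 0) :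
    (List.ofFn fun i => e i (t i)).reverse.prod ∈ H := by
  apply Subgroup.list_prod_mem
  intro x hx
  rw [List.mem_reverse, List.mem_ofFn] at hx
  obtain ⟨i, rfl⟩ := hx
  show e i (t i) ∈ H
  by_cases hi : (i:ℕ) < m
  · exact hH i (t i) hi
  · rw [ht i (by omega), e_zero e hone]
    exact one_mem H

lemma drop_ofFn_congr {M : Type*} (f f' : Fin n → M) (m : ℕ)
    (h : ∀ j : Fin n, m ≤ (j:ℕ) → f j = f' j) :
    (List.ofFn f).drop m = (List.ofFn f').drop m := by
  apply List.ext_getElem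
  · simp
  · intro i h1 h2
    rw [List.getElem_drop, List.getElem_drop, List.getElem_ofFn, List.getElem_ofFn]
    exact h _ (Nat.le_add_right m i)

end MQLQ2
namespace MQLQ3

open MQLQ MQLQ2

variable {G : Type*} [Group G] {n : ℕ}

lemma step_analysis (n' m : ℕ) (hn'm : n' ≤ m) (hmn : m < n)
    (e : Fin n → ℝ → G)
    (hone : ∀ (i : Fin n) (s t : ℝ), e i (s + t) = e i s * e i t)
    (φ : (Fin n → ℝ) → G)
    (hφ : ∀ t, φ t = (List.ofFn fun i => e i (t i)).prod)
    (H : Subgroup G) (hHnorm : H.Normal)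
    (hHcar : (H : Set G) = φ '' {t : Fin n → ℝ | ∀ j : Fin n, m ≤ (j : ℕ) → t j = 0})
    (N : Subgroup G) (hNn : N.Normal) (hNH : ∀ ν ∈ N, ν ∈ H)
    (g : G) (t : Fin n → ℝ) (k : Fin n → ℤ) (ν : G) (hν : ν ∈ N)
    (hIco : ∀ i, t i ∈ Set.Ico (0:ℝ) 1)
    (hsupp : ∀ j : Fin n, ((j:ℕ) < n' ∨ m + 1 ≤ (j:ℕ)) → t j = 0 ∧ k j = 0)
    (hg : g = ν * (List.ofFn fun i => e i (t i)).reverse.prod * φ (fun i => (k i : ℝ))) :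
    (∃ w : Fin n → ℝ, (∀ j : Fin n, m ≤ (j:ℕ) → w j = 0) ∧
        g = φ (fun j => if j = (⟨m, hmn⟩ : Fin n) then t ⟨m, hmn⟩ + (k ⟨m, hmn⟩ : ℝ) else w j))
    ∧ ((e ⟨m, hmn⟩ (t ⟨m, hmn⟩))⁻¹ * g * (e ⟨m, hmn⟩ ((k ⟨m, hmn⟩ : ℝ)))⁻¹
        = ((e ⟨m, hmn⟩ (t ⟨m, hmn⟩))⁻¹ * ν * (e ⟨m, hmn⟩ (t ⟨m, hmn⟩)))
            * (List.ofFn fun i => e i (Function.update t ⟨m, hmn⟩ 0 i)).reverse.prod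
            * φ (fun i => ((Function.update k ⟨m, hmn⟩ 0 i : ℤ) : ℝ)))
    ∧ ((e ⟨m, hmn⟩ (t ⟨m, hmn⟩))⁻¹ * ν * (e ⟨m, hmn⟩ (t ⟨m, hmn⟩)) ∈ N)
    ∧ (∀ i, Function.update t ⟨m, hmn⟩ 0 i ∈ Set.Ico (0:ℝ) 1)
    ∧ (∀ j : Fin n, ((j:ℕ) < n' ∨ m ≤ (j:ℕ)) →
        Function.update t ⟨m, hmn⟩ 0 j = 0 ∧ Function.update k ⟨m, hmn⟩ 0 j = 0) := by
  set M : Fin n := ⟨m, hmn⟩ with hM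
  have hMval : (M : ℕ) = m := rfl
  have heH : ∀ (i : Fin n) (s : ℝ), (i:ℕ) < m → e i s ∈ H := by
    intro i s hi
    rw [← phi_single e φ hone hφ i s]
    show φ _ ∈ (H : Set G)
    rw [hHcar]
    refine ⟨_, ?_, rfl⟩
    intro j hj
    have hji : j ≠ i := by
      intro hh; rw [hh] at hj; omega
    simp [hji]
  -- tails vanish above M
  have htt : ∀ j : Fin n, (M:ℕ) < (j:ℕ) → t j = 0 := fun j hj => (hsupp j (Or.inr hj)).1
  have hkt : ∀ j : Fin n, (M:ℕ) < (j:ℕ) → (fun i => (k i : ℝ)) j = 0 := by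
    intro j hj
    simp only []
    rw [(hsupp j (Or.inr hj)).2]
    norm_num
  -- truncations are the updates
  have hsupp' : ∀ j : Fin n, ((j:ℕ) < n' ∨ m ≤ (j:ℕ)) →
      Function.update t M 0 j = 0 ∧ Function.update k M 0 j = 0 := by
    intro j hj
    by_cases hjM : j = M
    · subst hjM; simp
    · have hjm : (j:ℕ) ≠ m := by
        intro hh
        exact hjM (Fin.ext hh)
      rw [Function.update_of_ne hjM, Function.update_of_ne hjM]
      exact hsupp j (by omega)
  have htr : trunc m t = Function.update t M 0 := by
    funext j
    by_cases hjM : j = M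
    · subst hjM
      simp [trunc, hMval]
    · rw [Function.update_of_ne hjM]
      by_cases hj : (j:ℕ) < m
      · simp [trunc, hj]
      · have hjm : (j:ℕ) ≠ m := by
          intro hh; exact hjM (Fin.ext hh)
        simp [trunc, hj, (hsupp j (by omega)).1]
  have hkr : trunc m (fun i => (k i : ℝ)) = fun i => ((Function.update k M 0 i : ℤ) : ℝ) := by
    funext j
    by_cases hjM : j = M
    · subst hjM
      simp [trunc, hMval]
    · rw [Function.update_of_ne hjM]
      by_cases hj : (j:ℕ) < m
      · simp [trunc, hj]
      · have hjm : (j:ℕ) ≠ m := by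
          intro hh; exact hjM (Fin.ext hh)
        simp [trunc, hj, (hsupp j (by omega)).2]
  -- split products
  have hRs : (List.ofFn fun i => e i (t i)).reverse.prod
      = e M (t M) * (List.ofFn fun i => e i (Function.update t M 0 i)).reverse.prod := by
    have h1 := rev_split e φ hone hφ M t htt
    rw [hMval, htr] at h1
    exact h1
  have hPs : φ (fun i => (k i : ℝ))
      = φ (fun i => ((Function.update k M 0 i : ℤ) : ℝ)) * e M ((k M : ℝ)) := by
    have h1 := phi_split e φ hone hφ M (fun i => (k i : ℝ)) hkt
    rw [hMval, hkr] at h1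
    exact h1
  have hgA : g = e M (t M) * (((e M (t M))⁻¹ * ν * (e M (t M)))
      * (List.ofFn fun i => e i (Function.update t M 0 i)).reverse.prod
      * φ (fun i => ((Function.update k M 0 i : ℤ) : ℝ))) * e M ((k M : ℝ)) := by
    rw [hg, hRs, hPs]
    group
  have hheq : (e M (t M))⁻¹ * g * (e M ((k M : ℝ)))⁻¹
      = ((e M (t M))⁻¹ * ν * (e M (t M)))
          * (List.ofFn fun i => e i (Function.update t M 0 i)).reverse.prod
          * φ (fun i => ((Function.update k M 0 i : ℤ) : ℝ)) := by
    rw [hgA]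
    group
  have hνc : (e M (t M))⁻¹ * ν * (e M (t M)) ∈ N := by
    have h1 : (e M (t M))⁻¹ * ν * (e M (t M)) = (e M (t M))⁻¹ * ν * ((e M (t M))⁻¹)⁻¹ := by
      rw [inv_inv]
    rw [h1]
    exact hNn.conj_mem ν hν _
  have hAH : ((e M (t M))⁻¹ * ν * (e M (t M)))
      * (List.ofFn fun i => e i (Function.update t M 0 i)).reverse.prod
      * φ (fun i => ((Function.update k M 0 i : ℤ) : ℝ)) ∈ H := by
    refine mul_mem (mul_mem ?_ ?_) ?_
    · exact hNH _ hνc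
    · exact rev_mem e φ hone hφ H m heH _ (fun j hj => (hsupp' j (Or.inr hj)).1)
    · show φ _ ∈ (H : Set G)
      rw [hHcar]
      refine ⟨_, ?_, rfl⟩
      intro j hj
      show ((Function.update k M 0 j : ℤ) : ℝ) = 0
      rw [(hsupp' j (Or.inr hj)).2]
      norm_num
  have hBH : e M (t M) * (((e M (t M))⁻¹ * ν * (e M (t M)))
      * (List.ofFn fun i => e i (Function.update t M 0 i)).reverse.prod
      * φ (fun i => ((Function.update k M 0 i : ℤ) : ℝ))) * (e M (t M))⁻¹ ∈ H :=
    hHnorm.conj_mem _ hAH _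
  have hBH' : e M (t M) * (((e M (t M))⁻¹ * ν * (e M (t M)))
      * (List.ofFn fun i => e i (Function.update t M 0 i)).reverse.prod
      * φ (fun i => ((Function.update k M 0 i : ℤ) : ℝ))) * (e M (t M))⁻¹ ∈ (H : Set G) := hBH
  rw [hHcar] at hBH'
  obtain ⟨w, hw, hBw⟩ := hBH'
  refine ⟨⟨w, hw, ?_⟩, hheq, hνc, ?_, hsupp'⟩
  · rw [phi_mul_e e φ hone hφ M w hw (t M + (k M : ℝ)), hBw, hone M (t M) ((k M : ℝ)), hgA]
    group
  · intro i
    by_cases hiM : i = M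
    · subst hiM
      simp
    · rw [Function.update_of_ne hiM]
      exact hIco i

end MQLQ3
namespace MQLQ3

lemma main {G : Type*} [Group G] {n : ℕ} (n' : ℕ) (e : Fin n → ℝ → G)
    (hone : ∀ (i : Fin n) (s t : ℝ), e i (s + t) = e i s * e i t)
    (φ : (Fin n → ℝ) → G)
    (hφ : ∀ t, φ t = (List.ofFn fun i => e i (t i)).prod)
    (hbij : Function.Bijective φ)
    (hideal : ∀ m : ℕ, ∃ H : Subgroup G, H.Normal ∧
      (H : Set G) = φ '' {t : Fin n → ℝ | ∀ j : Fin n, m ≤ (j : ℕ) → t j = 0})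
    (N : Subgroup G) (hNn : N.Normal)
    (hNcar : (N : Set G) = φ '' {t : Fin n → ℝ | ∀ j : Fin n, n' ≤ (j : ℕ) → t j = 0}) :
    ∀ m : ℕ, n' ≤ m → ∀ g : G,
      (∃ u : Fin n → ℝ, (∀ j : Fin n, m ≤ (j:ℕ) → u j = 0) ∧ g = φ u) →
      ∃! p : (Fin n → ℝ) × (Fin n → ℤ),
        (∀ i, p.1 i ∈ Set.Ico (0:ℝ) 1) ∧
        (∀ j : Fin n, ((j:ℕ) < n' ∨ m ≤ (j:ℕ)) → p.1 j = 0 ∧ p.2 j = 0) ∧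
        ∃ ν ∈ N, g = ν * (List.ofFn fun i => e i (p.1 i)).reverse.prod
            * φ (fun i => ((p.2 i : ℤ) : ℝ)) := by
  have hrev1 : (List.ofFn fun i => e i ((0:ℝ))).reverse.prod = 1 := by
    apply List.prod_eq_one
    intro x hx
    rw [List.mem_reverse, List.mem_ofFn] at hx
    obtain ⟨i, rfl⟩ := hx
    exact MQLQ2.e_zero e hone i
  intro m hm
  induction m, hm using Nat.le_induction with
  | base =>
    rintro g ⟨u, hu, rfl⟩
    refine ⟨⟨fun _ => 0, fun _ => 0⟩, ⟨?_, ?_, ?_⟩, ?_⟩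
    · intro i; simp
    · intro j hj; exact ⟨rfl, rfl⟩
    · refine ⟨φ u, ?_, ?_⟩
      · show φ u ∈ (N : Set G)
        rw [hNcar]
        exact ⟨u, hu, rfl⟩
      · have h1 : (List.ofFn fun i => e i ((fun _ => (0:ℝ)) i)).reverse.prod = 1 := hrev1
        have h2 : φ (fun i => (((fun _ => (0:ℤ)) i : ℤ) : ℝ)) = 1 := by
          have : (fun i : Fin n => (((fun _ => (0:ℤ)) i : ℤ) : ℝ)) = fun _ => (0:ℝ) := by
            funext i; norm_num
          rw [this]
          exact MQLQ2.phi_zero e φ hone hφ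
        rw [h1, h2, mul_one, mul_one]
    · rintro ⟨t, k⟩ ⟨hIco, hsupp, hν⟩
      have ht : t = fun _ => 0 := by
        funext i
        exact (hsupp i (by omega)).1
      have hk : k = fun _ => 0 := by
        funext i
        exact (hsupp i (by omega)).2
      rw [Prod.mk.injEq]
      exact ⟨ht, hk⟩
  | succ m hm ih =>
    rintro g ⟨u, hu, hgu⟩
    by_cases hmn : m < n
    · -- main case
      set M : Fin n := ⟨m, hmn⟩ with hMdef
      have hMval : (M : ℕ) = m := rfl
      obtain ⟨H, hHnorm, hHcar⟩ := hideal m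
      have hNH : ∀ ν ∈ N, ν ∈ H := by
        intro ν hν
        have h1 : ν ∈ (N : Set G) := hν
        rw [hNcar] at h1
        obtain ⟨w, hw, rfl⟩ := h1
        show φ w ∈ (H : Set G)
        rw [hHcar]
        exact ⟨w, fun j hj => hw j (by omega), rfl⟩
      -- the coordinate of g at M
      have hsplit_g : g = φ (MQLQ2.trunc m u) * e M (u M) := by
        rw [hgu]
        exact MQLQ2.phi_split e φ hone hφ M u (fun j hj => hu j (by omega))
      have hc : Int.fract (u M) + ((⌊u M⌋ : ℤ) : ℝ) = u M := Int.fract_add_floor (u M)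
      -- the reduced element
      have hhH : (e M (Int.fract (u M)))⁻¹ * g * (e M ((⌊u M⌋ : ℤ) : ℝ))⁻¹ ∈ H := by
        have h1 : (e M (Int.fract (u M)))⁻¹ * g * (e M ((⌊u M⌋ : ℤ) : ℝ))⁻¹
            = (e M (Int.fract (u M)))⁻¹ * φ (MQLQ2.trunc m u) * ((e M (Int.fract (u M)))⁻¹)⁻¹ := by
          rw [hsplit_g]
          have h2 : e M (u M) = e M (Int.fract (u M)) * e M ((⌊u M⌋ : ℤ) : ℝ) := by
            rw [← hone, hc]
          rw [h2]
          group
        rw [h1]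
        apply hHnorm.conj_mem
        show φ (MQLQ2.trunc m u) ∈ (H : Set G)
        rw [hHcar]
        refine ⟨_, ?_, rfl⟩
        intro j hj
        simp [MQLQ2.trunc, Nat.not_lt.mpr hj]
      have hhH' : (e M (Int.fract (u M)))⁻¹ * g * (e M ((⌊u M⌋ : ℤ) : ℝ))⁻¹ ∈ (H : Set G) := hhH
      rw [hHcar] at hhH'
      obtain ⟨v, hv, hhv⟩ := hhH'
      obtain ⟨⟨t₀, k₀⟩, ⟨hI₀, hS₀, ν₀, hν₀, hh₀⟩, hun₀⟩ := ih
        ((e M (Int.fract (u M)))⁻¹ * g * (e M ((⌊u M⌋ : ℤ) : ℝ))⁻¹) ⟨v, hv, hhv.symm⟩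
      replace hI₀ : ∀ i, t₀ i ∈ Set.Ico (0:ℝ) 1 := hI₀
      replace hS₀ : ∀ j : Fin n, ((j:ℕ) < n' ∨ m ≤ (j:ℕ)) → t₀ j = 0 ∧ k₀ j = 0 := hS₀
      replace hh₀ : (e M (Int.fract (u M)))⁻¹ * g * (e M ((⌊u M⌋ : ℤ) : ℝ))⁻¹
          = ν₀ * (List.ofFn fun i => e i (t₀ i)).reverse.prod * φ (fun i => ((k₀ i : ℤ) : ℝ)) := hh₀
      -- candidate
      have hS₀M : t₀ M = 0 ∧ k₀ M = 0 := hS₀ M (Or.inr (le_refl m))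
      have htr₁ : MQLQ2.trunc m (Function.update t₀ M (Int.fract (u M))) = t₀ := by
        funext j
        by_cases hjM : j = M
        · subst hjM
          simp [MQLQ2.trunc, hS₀M.1, hMval]
        · rw [MQLQ2.trunc]
          simp only [Function.update_of_ne hjM]
          by_cases hj : (j:ℕ) < m
          · simp [hj]
          · have h0 : t₀ j = 0 := (hS₀ j (Or.inr (by omega : m ≤ (j:ℕ)))).1
            simp [hj, h0]
      have hkr₁ : MQLQ2.trunc m (fun i => ((Function.update k₀ M ⌊u M⌋ i : ℤ) : ℝ))
          = fun i => ((k₀ i : ℤ) : ℝ) := by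
        funext j
        by_cases hjM : j = M
        · subst hjM
          simp [MQLQ2.trunc, hS₀M.2, hMval]
        · rw [MQLQ2.trunc]
          simp only [Function.update_of_ne hjM]
          by_cases hj : (j:ℕ) < m
          · simp [hj]
          · have h0 : k₀ j = 0 := (hS₀ j (Or.inr (by omega : m ≤ (j:ℕ)))).2
            simp [hj, h0]
      have hR₁ : (List.ofFn fun i => e i (Function.update t₀ M (Int.fract (u M)) i)).reverse.prod
          = e M (Int.fract (u M)) * (List.ofFn fun i => e i (t₀ i)).reverse.prod := by
        have h1 := MQLQ2.rev_split e φ hone hφ M (Function.update t₀ M (Int.fract (u M)))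
          (by
            intro j hj
            have hjM : j ≠ M := by
              intro hh; rw [hh] at hj; omega
            rw [Function.update_of_ne hjM]
            exact (hS₀ j (Or.inr (le_of_lt hj))).1)
        rw [htr₁] at h1
        simpa using h1
      have hP₁ : φ (fun i => ((Function.update k₀ M ⌊u M⌋ i : ℤ) : ℝ))
          = φ (fun i => ((k₀ i : ℤ) : ℝ)) * e M ((⌊u M⌋ : ℤ) : ℝ) := by
        have h1 := MQLQ2.phi_split e φ hone hφ M (fun i => ((Function.update k₀ M ⌊u M⌋ i : ℤ) : ℝ))
          (by
            intro j hj
            have hjM : j ≠ M := by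
              intro hh; rw [hh] at hj; omega
            show ((Function.update k₀ M ⌊u M⌋ j : ℤ) : ℝ) = 0
            rw [Function.update_of_ne hjM, (hS₀ j (Or.inr (le_of_lt hj))).2]
            norm_num)
        rw [hkr₁] at h1
        simpa using h1
      have hg₁ : g = (e M (Int.fract (u M)) * ν₀ * (e M (Int.fract (u M)))⁻¹)
          * (List.ofFn fun i => e i (Function.update t₀ M (Int.fract (u M)) i)).reverse.prod
          * φ (fun i => ((Function.update k₀ M ⌊u M⌋ i : ℤ) : ℝ)) := by
        rw [hR₁, hP₁]
        have hgh : g = e M (Int.fract (u M))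
            * ((e M (Int.fract (u M)))⁻¹ * g * (e M ((⌊u M⌋ : ℤ) : ℝ))⁻¹)
            * e M ((⌊u M⌋ : ℤ) : ℝ) := by group
        conv_lhs => rw [hgh, hh₀]
        group
      have hν₁ : e M (Int.fract (u M)) * ν₀ * (e M (Int.fract (u M)))⁻¹ ∈ N :=
        hNn.conj_mem ν₀ hν₀ _
      have hI₁ : ∀ i, Function.update t₀ M (Int.fract (u M)) i ∈ Set.Ico (0:ℝ) 1 := by
        intro i
        by_cases hiM : i = M
        · subst hiM
          simp [Int.fract_nonneg, Int.fract_lt_one]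
        · rw [Function.update_of_ne hiM]
          exact hI₀ i
      have hS₁ : ∀ j : Fin n, ((j:ℕ) < n' ∨ m + 1 ≤ (j:ℕ)) →
          Function.update t₀ M (Int.fract (u M)) j = 0 ∧ Function.update k₀ M ⌊u M⌋ j = 0 := by
        intro j hj
        have hjM : j ≠ M := by
          intro hh
          rw [hh] at hj
          omega
        rw [Function.update_of_ne hjM, Function.update_of_ne hjM]
        refine hS₀ j ?_
        rcases hj with h | h
        · exact Or.inl h
        · exact Or.inr (by omega)
      refine ⟨⟨Function.update t₀ M (Int.fract (u M)), Function.update k₀ M ⌊u M⌋⟩,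
        ⟨hI₁, hS₁, _, hν₁, hg₁⟩, ?_⟩
      -- uniqueness
      rintro ⟨t, k⟩ ⟨hIq, hSq, νq, hνqN, hgq⟩
      obtain ⟨⟨w, hw, hgw⟩, hhq, hνqc, hIq', hSq'⟩ :=
        step_analysis n' m hm hmn e hone φ hφ H hHnorm hHcar N hNn hNH g t k νq hνqN hIq hSq hgq
      obtain ⟨⟨w₁, hw₁, hgw₁⟩, hh₁, _, _, _⟩ :=
        step_analysis n' m hm hmn e hone φ hφ H hHnorm hHcar N hNn hNH g
          (Function.update t₀ M (Int.fract (u M))) (Function.update k₀ M ⌊u M⌋) _ hν₁ hI₁ hS₁ hg₁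
      -- coordinates at M agree
      have hfun := hbij.injective (hgw.symm.trans hgw₁)
      have hcoord : t M + ((k M : ℤ) : ℝ)
          = Function.update t₀ M (Int.fract (u M)) M + ((Function.update k₀ M ⌊u M⌋ M : ℤ) : ℝ) := by
        have := congrFun hfun M
        simpa [hMdef] using this
      have hcoord' : t M + ((k M : ℤ) : ℝ) = Int.fract (u M) + ((⌊u M⌋ : ℤ) : ℝ) := by
        rw [hcoord]
        simp
      have htM : t M = Int.fract (u M) := by
        have h1 : Int.fract (t M + ((k M : ℤ) : ℝ)) = Int.fract (Int.fract (u M) + ((⌊u M⌋ : ℤ) : ℝ)) := by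
          rw [hcoord']
        rw [Int.fract_add_intCast, Int.fract_add_intCast, Int.fract_fract,
          Int.fract_eq_self.mpr ⟨(hIq M).1, (hIq M).2⟩] at h1
        exact h1
      have hkM : k M = ⌊u M⌋ := by
        have h1 : ((k M : ℤ) : ℝ) = ((⌊u M⌋ : ℤ) : ℝ) := by
          rw [htM] at hcoord'
          linarith
        exact_mod_cast h1
      -- the reduced pairs agree by ih uniqueness
      have hq' := hun₀ ⟨Function.update t M 0, Function.update k M 0⟩
        ⟨hIq', hSq', (e M (t M))⁻¹ * νq * (e M (t M)), hνqc, by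
          rw [← hhq, htM, hkM]⟩
      have hq'1 : Function.update t M 0 = t₀ := congrArg Prod.fst hq'
      have hq'2 : Function.update k M 0 = k₀ := congrArg Prod.snd hq'
      rw [Prod.mk.injEq]
      constructor
      · funext i
        by_cases hiM : i = M
        · subst hiM; rw [Function.update_self, htM]
        · rw [Function.update_of_ne hiM, ← hq'1, Function.update_of_ne hiM]
      · funext i
        by_cases hiM : i = M
        · subst hiM; rw [Function.update_self, hkM]
        · rw [Function.update_of_ne hiM, ← hq'2, Function.update_of_ne hiM]
    · -- degenerate case m ≥ n
      have hnm : n ≤ m := Nat.le_of_not_lt hmn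
      obtain ⟨p₀, ⟨hI, hS, hν⟩, hun⟩ := ih g
        ⟨u, fun j hj => absurd hj (by have := j.isLt; omega), hgu⟩
      refine ⟨p₀, ⟨hI, fun j hj => hS j (by omega), hν⟩, ?_⟩
      rintro q ⟨hIq, hSq, hνq⟩
      exact hun q ⟨hIq, fun j hj => hSq j (by have := j.isLt; omega), hνq⟩

end MQLQ3
namespace MQLQ3

open MQLQ MQLQ2

lemma reduce {G : Type*} [Group G] {n : ℕ} (n' : ℕ) (e : Fin n → ℝ → G)
    (hone : ∀ (i : Fin n) (s t : ℝ), e i (s + t) = e i s * e i t)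
    (φ : (Fin n → ℝ) → G)
    (hφ : ∀ t, φ t = (List.ofFn fun i => e i (t i)).prod)
    (N : Subgroup G)
    (hNcar : (N : Set G) = φ '' {t : Fin n → ℝ | ∀ j : Fin n, n' ≤ (j : ℕ) → t j = 0})
    (t : Fin n → ℝ) (k : Fin n → ℤ) :
    (∃ ρ ∈ N, (List.ofFn fun i => e i (t i)).reverse.prod
        = (List.ofFn fun i => e i ((fun j : Fin n => if (j:ℕ) < n' then 0 else t j) i)).reverse.prod * ρ)
    ∧ (∃ ν ∈ N, φ (fun i => (k i : ℝ))
        = ν * φ (fun i => (((fun j : Fin n => if (j:ℕ) < n' then 0 else k j) i : ℤ) : ℝ))) := by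
  have hNmem : ∀ w : Fin n → ℝ, (∀ j : Fin n, n' ≤ (j:ℕ) → w j = 0) → φ w ∈ N := by
    intro w hw
    show φ w ∈ (N : Set G)
    rw [hNcar]
    exact ⟨w, hw, rfl⟩
  have hzero : ∀ w : Fin n → ℝ, (∀ j : Fin n, w j = 0) →
      (List.ofFn fun i => e i (w i)).reverse.prod = 1 := by
    intro w hw
    apply List.prod_eq_one
    intro x hx
    rw [List.mem_reverse, List.mem_ofFn] at hx
    obtain ⟨i, rfl⟩ := hx
    show e i (w i) = 1
    rw [hw i]
    exact e_zero e hone i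
  constructor
  · -- reverse product part
    have h1 := rev_split_at e φ hone hφ n' t
    have h2 := rev_split_at e φ hone hφ n' (fun j : Fin n => if (j:ℕ) < n' then 0 else t j)
    have hdropeq : (List.ofFn fun i => e i (t i)).drop n'
        = (List.ofFn fun i => e i ((fun j : Fin n => if (j:ℕ) < n' then 0 else t j) i)).drop n' := by
      apply drop_ofFn_congr
      intro j hj
      simp [Nat.not_lt.mpr hj]
    have htr2 : (fun i : Fin n => trunc n' (fun j : Fin n => if (j:ℕ) < n' then 0 else t j) i)
        = fun _ : Fin n => (0:ℝ) := by
      funext j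
      by_cases hj : (j:ℕ) < n' <;> simp [trunc, hj]
    have htr3 : ∀ i : Fin n, trunc n' (fun j : Fin n => if (j:ℕ) < n' then 0 else t j) i = 0 :=
      fun i => congrFun htr2 i
    simp only [htr3] at h2
    have hzero0 : (List.ofFn fun i : Fin n => e i (0:ℝ)).reverse.prod = 1 :=
      hzero _ (fun _ => rfl)
    rw [hzero0, mul_one] at h2
    refine ⟨(List.ofFn fun i => e i (trunc n' t i)).reverse.prod, ?_, ?_⟩
    · apply Subgroup.list_prod_mem
      intro x hx
      rw [List.mem_reverse, List.mem_ofFn] at hx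
      obtain ⟨i, rfl⟩ := hx
      show e i (trunc n' t i) ∈ N
      by_cases hi : (i:ℕ) < n'
      · rw [← phi_single e φ hone hφ i (trunc n' t i)]
        apply hNmem
        intro j hj
        have hji : j ≠ i := by intro hh; rw [hh] at hj; omega
        simp [hji]
      · have : trunc n' t i = 0 := by simp [trunc, hi]
        rw [this, e_zero e hone]
        exact one_mem N
    · rw [h1, hdropeq]
      congr 1
      exact h2.symm
  · -- direct product part
    have h1 := phi_split_at e φ hone hφ n' (fun i => (k i : ℝ))
    have h2 := phi_split_at e φ hone hφ n'
      (fun i => (((fun j : Fin n => if (j:ℕ) < n' then 0 else k j) i : ℤ) : ℝ))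
    have hdropeq : (List.ofFn fun i => e i ((k i : ℝ))).drop n'
        = (List.ofFn fun i =>
            e i (((fun j : Fin n => if (j:ℕ) < n' then 0 else k j) i : ℤ) : ℝ)).drop n' := by
      apply drop_ofFn_congr
      intro j hj
      simp [Nat.not_lt.mpr hj]
    have htr2 : (fun i : Fin n =>
        trunc n' (fun i => (((fun j : Fin n => if (j:ℕ) < n' then 0 else k j) i : ℤ) : ℝ)) i)
        = fun _ : Fin n => (0:ℝ) := by
      funext j
      by_cases hj : (j:ℕ) < n' <;> simp [trunc, hj]
    have h2' : φ (fun i => (((fun j : Fin n => if (j:ℕ) < n' then 0 else k j) i : ℤ) : ℝ))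
        = ((List.ofFn fun i => e i ((k i : ℝ))).drop n').prod := by
      rw [h2]
      have hφ0 : φ (trunc n' fun i => (((fun j : Fin n => if (j:ℕ) < n' then 0 else k j) i : ℤ) : ℝ)) = 1 := by
        have : (trunc n' fun i => (((fun j : Fin n => if (j:ℕ) < n' then 0 else k j) i : ℤ) : ℝ))
            = fun _ : Fin n => (0:ℝ) := htr2
        rw [this]
        exact phi_zero e φ hone hφ
      rw [hφ0, one_mul, hdropeq]
    refine ⟨φ (trunc n' (fun i => (k i : ℝ))), ?_, ?_⟩
    · apply hNmem
      intro j hj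
      simp [trunc, Nat.not_lt.mpr hj]
    · rw [h1, h2']

end MQLQ3

/-- Projection of a quasi-lattice to a quotient: let `G` be as in the quasi-lattice lemma,
with strong Malcev coordinate map `φ` passing through the ideal `n = span(X_1,…,X_{n'})`,
so that `N = exp(n)` is a normal subgroup, and let `pr : G → N\G` be the quotient map.
Then `pr(Γ)` is a quasi-lattice in `N\G` with fundamental domain `pr(Σ)`:
`N\G = ⊔_{γ̄ ∈ pr(Γ)} pr(Σ)·γ̄` disjointly. -/
theorem malcev_quasi_lattice_quotient {G : Type*} [Group G] (n n' : ℕ)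
    (e : Fin n → ℝ → G)
    (hone : ∀ (i : Fin n) (s t : ℝ), e i (s + t) = e i s * e i t)
    (φ : (Fin n → ℝ) → G)
    (hφ : ∀ t, φ t = (List.ofFn fun i => e i (t i)).prod)
    (hbij : Function.Bijective φ)
    (hideal : ∀ m : ℕ, ∃ H : Subgroup G, H.Normal ∧
      (H : Set G) = φ '' {t : Fin n → ℝ | ∀ j : Fin n, m ≤ (j : ℕ) → t j = 0})
    (N : Subgroup G) [hNn : N.Normal]
    (hNcar : (N : Set G) = φ '' {t : Fin n → ℝ | ∀ j : Fin n, n' ≤ (j : ℕ) → t j = 0}) :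
    ∀ x : G ⧸ N, ∃! γ : G ⧸ N,
      γ ∈ (QuotientGroup.mk : G → G ⧸ N) ''
            {g : G | ∃ k : Fin n → ℤ, g = φ fun i => (k i : ℝ)} ∧
      x * γ⁻¹ ∈ (QuotientGroup.mk : G → G ⧸ N) ''
            {g : G | ∃ t : Fin n → ℝ, (∀ i, t i ∈ Set.Ico (0 : ℝ) 1) ∧
              g = (List.ofFn fun i => e i (t i)).reverse.prod} := by
  intro x
  obtain ⟨g₀, rfl⟩ := QuotientGroup.mk_surjective x
  obtain ⟨u₀, hu₀⟩ := hbij.surjective g₀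
  obtain ⟨⟨t₀, k₀⟩, ⟨hI₀, hS₀, ν₀, hν₀, hg₀⟩, hun⟩ :=
    MQLQ3.main n' e hone φ hφ hbij hideal N hNn hNcar (max n n') (le_max_right n n') g₀
      ⟨u₀, fun j hj => absurd hj (by have := j.isLt; omega), hu₀.symm⟩
  replace hI₀ : ∀ i, t₀ i ∈ Set.Ico (0:ℝ) 1 := hI₀
  replace hg₀ : g₀ = ν₀ * (List.ofFn fun i => e i (t₀ i)).reverse.prod
      * φ (fun i => ((k₀ i : ℤ) : ℝ)) := hg₀
  have hmk1 : (QuotientGroup.mk ν₀ : G ⧸ N) = 1 := (QuotientGroup.eq_one_iff ν₀).mpr hν₀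
  refine ⟨QuotientGroup.mk (φ (fun i => ((k₀ i : ℤ) : ℝ))), ⟨⟨_, ⟨k₀, rfl⟩, rfl⟩, ?_⟩, ?_⟩
  · refine ⟨(List.ofFn fun i => e i (t₀ i)).reverse.prod, ⟨t₀, hI₀, rfl⟩, ?_⟩
    rw [hg₀, QuotientGroup.mk_mul, QuotientGroup.mk_mul, hmk1, one_mul, mul_inv_cancel_right]
  · rintro γ' ⟨⟨a, ⟨k, rfl⟩, ha⟩, ⟨b, ⟨t, hIt, rfl⟩, hb⟩⟩
    subst ha
    have hx : (QuotientGroup.mk g₀ : G ⧸ N)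
        = QuotientGroup.mk ((List.ofFn fun i => e i (t i)).reverse.prod
            * φ (fun i => (k i : ℝ))) := by
      rw [QuotientGroup.mk_mul, hb, inv_mul_cancel_right]
    have hνmem := QuotientGroup.eq.mp hx.symm
    obtain ⟨⟨ρ, hρ, hRred⟩, ⟨νb, hνb, hPred⟩⟩ := MQLQ3.reduce n' e hone φ hφ N hNcar t k
    have h5 : ∃ ν ∈ N, g₀ = ν
        * (List.ofFn fun i => e i ((fun j : Fin n => if (j:ℕ) < n' then 0 else t j) i)).reverse.prod
        * φ (fun i => (((fun j : Fin n => if (j:ℕ) < n' then 0 else k j) i : ℤ) : ℝ)) := by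
      set R := (List.ofFn fun i => e i (t i)).reverse.prod with hR
      set P := φ (fun i => (k i : ℝ)) with hP
      set Rt := (List.ofFn fun i =>
        e i ((fun j : Fin n => if (j:ℕ) < n' then 0 else t j) i)).reverse.prod with hRt
      set Pk := φ (fun i =>
        (((fun j : Fin n => if (j:ℕ) < n' then 0 else k j) i : ℤ) : ℝ)) with hPk
      refine ⟨((R * P) * ((R * P)⁻¹ * g₀) * (R * P)⁻¹) * (Rt * (ρ * νb) * Rt⁻¹), ?_, ?_⟩
      · exact mul_mem (hNn.conj_mem _ hνmem _) (hNn.conj_mem (ρ * νb) (mul_mem hρ hνb) Rt)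
      · rw [hRred, hPred]
        group
    obtain ⟨νf, hνfN, hg02⟩ := h5
    have hIt' : ∀ i, (fun j : Fin n => if (j:ℕ) < n' then 0 else t j) i ∈ Set.Ico (0:ℝ) 1 := by
      intro i
      by_cases hi : (i:ℕ) < n'
      · simp [hi]
      · simpa [hi] using hIt i
    have hSt' : ∀ j : Fin n, ((j:ℕ) < n' ∨ max n n' ≤ (j:ℕ)) →
        (fun j : Fin n => if (j:ℕ) < n' then 0 else t j) j = 0
        ∧ (fun j : Fin n => if (j:ℕ) < n' then 0 else k j) j = 0 := by
      intro j hj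
      rcases hj with h | h
      · simp [h]
      · exact absurd h (by have := j.isLt; omega)
    have heq := hun ⟨fun j : Fin n => if (j:ℕ) < n' then 0 else t j,
        fun j : Fin n => if (j:ℕ) < n' then 0 else k j⟩
      ⟨hIt', hSt', νf, hνfN, hg02⟩
    have hk : (fun j : Fin n => if (j:ℕ) < n' then 0 else k j) = k₀ := congrArg Prod.snd heq
    have hmkb : (QuotientGroup.mk νb : G ⧸ N) = 1 := (QuotientGroup.eq_one_iff νb).mpr hνb
    rw [hPred, QuotientGroup.mk_mul, hmkb, one_mul]
    have hk' : ∀ i : Fin n, (fun j : Fin n => if (j:ℕ) < n' then 0 else k j) i = k₀ i :=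
      fun i => congrFun hk i
    simp only [hk']
end

section
/- The family of functions on ℝ³ given by (t_1,t_2,t_3) ↦ e^{2πi(t_1ϑ_1+t_2ϑ_2+t_3ϑ_3)} e^{2πi(t_1t_2η_3/(2λ) + t_1η_2(t_3+η_3)/λ)} 1_{[0,1)³}(t_1+η_1, t_2+η_2, t_3+η_3), indexed by ϑ_1,ϑ_2,ϑ_3,η_1,η_2,η_3 ∈ ℤ, forms an orthonormal basis of L²(ℝ³), for any fixed λ ≠ 0. -/
open MeasureTheory Complex Real

namespace DyninFolland

instance fact_zero_lt_one_real : Fact ((0:ℝ) < 1) := ⟨zero_lt_one⟩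

abbrev X := Fin 3 → ℝ
abbrev Y := Fin 3 → AddCircle (1:ℝ)
abbrev P3 := (Fin 3 → ℤ) × (Fin 3 → ℤ)

/-! ### Basic pointwise lemmas -/

lemma conj_ind {α : Type*} (S : Set α) (u : α) :
    (starRingEnd ℂ) (Set.indicator S (fun _ => (1 : ℂ)) u) =
      Set.indicator S (fun _ => (1 : ℂ)) u := by
  by_cases h : u ∈ S <;> simp [h]

lemma ind_sq {α : Type*} (S : Set α) (u : α) :
    Set.indicator S (fun _ => (1 : ℂ)) u * Set.indicator S (fun _ => (1 : ℂ)) u =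
      Set.indicator S (fun _ => (1 : ℂ)) u := by
  by_cases h : u ∈ S <;> simp [h]

lemma ind_pi (u : Fin 3 → ℝ) :
    Set.indicator (Set.univ.pi fun _ : Fin 3 => Set.Ico (0 : ℝ) 1) (fun _ => (1 : ℂ)) u =
      ∏ j, Set.indicator (Set.Ico (0 : ℝ) 1) (fun _ => (1 : ℂ)) (u j) := by
  by_cases h : u ∈ Set.univ.pi fun _ : Fin 3 => Set.Ico (0 : ℝ) 1
  · rw [Set.indicator_of_mem h]
    exact (Finset.prod_eq_one fun j _ =>
      Set.indicator_of_mem (h j (Set.mem_univ j)) _).symm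
  · rw [Set.indicator_of_notMem h]
    rw [Set.mem_univ_pi] at h
    push_neg at h
    obtain ⟨j, hj⟩ := h
    exact (Finset.prod_eq_zero (Finset.mem_univ j)
      (Set.indicator_of_notMem hj _)).symm

lemma conj_exp_ofReal_mul_I (r : ℝ) :
    (starRingEnd ℂ) (Complex.exp ((r : ℂ) * Complex.I)) =
      Complex.exp (((-r : ℝ) : ℂ) * Complex.I) := by
  rw [← Complex.exp_conj]; congr 1; simp [Complex.conj_I]; try ring

/-! ### The functions -/

noncomputable def E1 (ϑ : Fin 3 → ℤ) : X → ℂ := fun t =>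
  Complex.exp (((2 * Real.pi * ∑ j, t j * (ϑ j : ℝ) : ℝ) : ℂ) * Complex.I)

noncomputable def Phi (lam : ℝ) (η : Fin 3 → ℤ) : X → ℂ := fun t =>
  Complex.exp (((2 * Real.pi *
      (t 0 * t 1 * (η 2 : ℝ) / (2 * lam) +
        t 0 * (η 1 : ℝ) * (t 2 + (η 2 : ℝ)) / lam) : ℝ) : ℂ) * Complex.I)

noncomputable def Af (lam : ℝ) (p : P3) : X → ℂ := fun t =>
  E1 p.1 t * Phi lam p.2 t *
  Set.indicator (Set.univ.pi fun _ : Fin 3 => Set.Ico (0 : ℝ) 1)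
    (fun _ => (1 : ℂ)) (fun j => t j + (p.2 j : ℝ))

lemma continuous_Phi (lam : ℝ) (η : Fin 3 → ℤ) : Continuous (Phi lam η) := by
  unfold Phi
  fun_prop

/-! ### Orthonormality -/

lemma oneDim (k η : ℤ) :
    (∫ x : ℝ, Complex.exp (((2 * Real.pi * (x * (k : ℝ)) : ℝ) : ℂ) * Complex.I) *
      Set.indicator (Set.Ico (0 : ℝ) 1) (fun _ => (1 : ℂ)) (x + (η : ℝ)))
      = if k = 0 then 1 else 0 := by
  have hpt : ∀ x : ℝ,
      Complex.exp (((2 * Real.pi * (x * (k : ℝ)) : ℝ) : ℂ) * Complex.I) *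
        Set.indicator (Set.Ico (0 : ℝ) 1) (fun _ => (1 : ℂ)) (x + (η : ℝ))
      = Set.indicator (Set.Ico (-(η : ℝ)) (1 - (η : ℝ)))
          (fun x => Complex.exp (((2 * Real.pi * (x * (k : ℝ)) : ℝ) : ℂ) * Complex.I)) x := by
    intro x
    by_cases hx : x ∈ Set.Ico (-(η : ℝ)) (1 - (η : ℝ))
    · rw [Set.indicator_of_mem hx, Set.indicator_of_mem, mul_one]
      obtain ⟨h1, h2⟩ := hx
      exact ⟨by linarith, by linarith⟩
    · rw [Set.indicator_of_notMem hx, Set.indicator_of_notMem, mul_zero]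
      intro hmem
      obtain ⟨h1, h2⟩ := hmem
      exact hx ⟨by linarith, by linarith⟩
  rw [integral_congr_ae (Filter.Eventually.of_forall hpt),
    integral_indicator measurableSet_Ico,
    MeasureTheory.restrict_Ico_eq_restrict_Ioc,
    ← intervalIntegral.integral_of_le (by linarith : -(η:ℝ) ≤ 1 - (η:ℝ))]
  by_cases hk : k = 0
  · simp only [hk, Int.cast_zero, mul_zero, Complex.ofReal_zero, zero_mul, Complex.exp_zero,
      if_pos]
    rw [intervalIntegral.integral_const]
    norm_num
  · rw [if_neg hk]
    have harg : ∀ x : ℝ, (((2 * Real.pi * (x * (k : ℝ)) : ℝ) : ℂ) * Complex.I)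
        = (2 * Real.pi * (k : ℝ) * Complex.I) * (x : ℂ) := by
      intro x; push_cast; ring
    have hc : (2 * Real.pi * (k : ℝ) * Complex.I : ℂ) ≠ 0 := by
      simp [Real.pi_ne_zero, Complex.I_ne_zero, hk]
    simp_rw [harg]
    rw [integral_exp_mul_complex hc, div_eq_zero_iff]
    left
    rw [sub_eq_zero, show (2 * (Real.pi:ℂ) * (k : ℝ) * Complex.I * (((1:ℝ) - (η : ℝ) : ℝ) : ℂ))
        = 2 * (Real.pi:ℂ) * (k : ℝ) * Complex.I * ((-(η : ℝ) : ℝ) : ℂ) + (k : ℂ) * (2 * (Real.pi:ℂ) * Complex.I) by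
      push_cast; ring]
    rw [Complex.exp_add, Complex.exp_int_mul_two_pi_mul_I, mul_one]

lemma key_eq (lam : ℝ) (p q : P3) (hη : p.2 = q.2) (t : Fin 3 → ℝ) :
    (starRingEnd ℂ) (Af lam p t) * Af lam q t =
      ∏ j, (Complex.exp (((2 * Real.pi * (t j * ((q.1 j - p.1 j : ℤ) : ℝ)) : ℝ) : ℂ) * Complex.I) *
        Set.indicator (Set.Ico (0 : ℝ) 1) (fun _ => (1 : ℂ)) (t j + ((q.2 j : ℤ) : ℝ))) := by
  unfold Af E1 Phi
  rw [hη]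
  simp only [map_mul, conj_exp_ofReal_mul_I, conj_ind]
  rw [show ∀ a b c a' b' c' : ℂ, a * b * c * (a' * b' * c') = (a * a') * (b * b') * (c * c')
    from fun _ _ _ _ _ _ => by ring]
  rw [← Complex.exp_add, ← Complex.exp_add, ind_sq, ind_pi, Finset.prod_mul_distrib]
  congr 1
  rw [show (((-(2 * Real.pi *
      (t 0 * t 1 * ((q.2 2 : ℤ) : ℝ) / (2 * lam) +
        t 0 * ((q.2 1 : ℤ) : ℝ) * (t 2 + ((q.2 2 : ℤ) : ℝ)) / lam)) : ℝ) : ℂ) * Complex.I +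
      ((2 * Real.pi *
      (t 0 * t 1 * ((q.2 2 : ℤ) : ℝ) / (2 * lam) +
        t 0 * ((q.2 1 : ℤ) : ℝ) * (t 2 + ((q.2 2 : ℤ) : ℝ)) / lam) : ℝ) : ℂ) * Complex.I) = 0
    by push_cast; ring]
  rw [Complex.exp_zero, mul_one, ← Complex.exp_sum]
  congr 1
  simp only [Fin.sum_univ_three]
  push_cast
  ring

lemma int_in_Ico_unique {a b : ℤ} {x y : ℝ} (hxy : x = y)
    (ha : x + (a : ℝ) ∈ Set.Ico (0:ℝ) 1) (hb : y + (b : ℝ) ∈ Set.Ico (0:ℝ) 1) : a = b := by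
  subst hxy
  obtain ⟨h1, h2⟩ := ha; obtain ⟨h3, h4⟩ := hb
  have habs : |((a - b : ℤ) : ℝ)| < 1 := by
    rw [abs_lt]; push_cast; constructor <;> linarith
  have h5 : |a - b| < (1 : ℤ) := by
    rw [← @Int.cast_one ℝ, ← Int.cast_abs] at habs
    exact_mod_cast habs
  have := abs_lt.mp h5
  omega

lemma integral_conj_Af (lam : ℝ) (p q : P3) :
    (∫ t : Fin 3 → ℝ, (starRingEnd ℂ) (Af lam p t) * Af lam q t) =
      if p = q then 1 else 0 := by
  by_cases hη : p.2 = q.2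
  · rw [integral_congr_ae (Filter.Eventually.of_forall (key_eq lam p q hη))]
    rw [volume_pi, MeasureTheory.integral_fintype_prod_eq_prod
      (f := fun j x => Complex.exp (((2 * Real.pi * (x * ((q.1 j - p.1 j : ℤ) : ℝ)) : ℝ) : ℂ) * Complex.I) *
        Set.indicator (Set.Ico (0 : ℝ) 1) (fun _ => (1 : ℂ)) (x + ((q.2 j : ℤ) : ℝ)))]
    simp only [oneDim]
    by_cases hϑ : p.1 = q.1
    · have hpq : p = q := Prod.ext hϑ hη
      simp [hpq]
    · rw [if_neg (fun h => hϑ (congrArg Prod.fst h))]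
      obtain ⟨j, hj⟩ := Function.ne_iff.mp hϑ
      exact Finset.prod_eq_zero (Finset.mem_univ j)
        (by rw [if_neg (sub_ne_zero.mpr (Ne.symm hj))])
  · rw [if_neg (fun h => hη (congrArg Prod.snd h))]
    have hz : ∀ t : Fin 3 → ℝ, (starRingEnd ℂ) (Af lam p t) * Af lam q t = 0 := by
      intro t
      obtain ⟨j, hj⟩ := Function.ne_iff.mp hη
      by_cases hm : (fun i => t i + (p.2 i : ℝ)) ∈
          Set.univ.pi fun _ : Fin 3 => Set.Ico (0 : ℝ) 1
      · by_cases hm' : (fun i => t i + (q.2 i : ℝ)) ∈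
            Set.univ.pi fun _ : Fin 3 => Set.Ico (0 : ℝ) 1
        · exact absurd (int_in_Ico_unique rfl (hm j (Set.mem_univ j)) (hm' j (Set.mem_univ j))) hj
        · unfold Af; rw [Set.indicator_of_notMem hm']; ring
      · unfold Af; rw [Set.indicator_of_notMem hm]; simp
    rw [integral_congr_ae (Filter.Eventually.of_forall hz), integral_zero]

/-! ### Characters on the 3-torus, Stone–Weierstrass -/

noncomputable def char3 (ϑ : Fin 3 → ℤ) : C(Y, ℂ) :=
  ∏ j, (fourier (ϑ j)).comp ⟨fun y => y j, continuous_apply j⟩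

lemma char3_apply (ϑ : Fin 3 → ℤ) (y : Y) :
    char3 ϑ y = ∏ j, fourier (ϑ j) (y j) := by
  simp [char3]

lemma char3_zero : char3 0 = 1 := by
  ext y; simp [char3_apply, fourier_zero]

lemma char3_mul (a b : Fin 3 → ℤ) : char3 (a + b) = char3 a * char3 b := by
  ext y
  simp only [char3_apply, ContinuousMap.mul_apply, ← Finset.prod_mul_distrib]
  exact Finset.prod_congr rfl fun j _ => by simp [fourier_add]

lemma char3_star (a : Fin 3 → ℤ) : star (char3 a) = char3 (-a) := by
  ext y
  simp only [ContinuousMap.star_apply, char3_apply, Pi.neg_apply]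
  rw [RCLike.star_def, map_prod]
  exact Finset.prod_congr rfl fun j _ => (fourier_neg (n := a j) (x := y j)).symm

noncomputable def charSubalgebra : StarSubalgebra ℂ C(Y, ℂ) where
  toSubalgebra := Algebra.adjoin ℂ (Set.range char3)
  star_mem' := by
    show Algebra.adjoin ℂ (Set.range char3) ≤ star (Algebra.adjoin ℂ (Set.range char3))
    refine Algebra.adjoin_le ?_
    rintro - ⟨n, rfl⟩
    exact Algebra.subset_adjoin ⟨-n, (char3_star n).symm⟩

lemma charSubalgebra_coe :
    Subalgebra.toSubmodule charSubalgebra.toSubalgebra = Submodule.span ℂ (Set.range char3) := by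
  apply Algebra.adjoin_eq_span_of_subset
  refine Set.Subset.trans ?_ Submodule.subset_span
  intro x hx
  refine Submonoid.closure_induction (fun _ => id) ⟨0, char3_zero⟩ ?_ hx
  rintro - - - - ⟨m, rfl⟩ ⟨n, rfl⟩
  exact ⟨m + n, char3_mul m n⟩

lemma charSubalgebra_separatesPoints : charSubalgebra.SeparatesPoints := by
  intro x y hxy
  obtain ⟨j, hj⟩ := Function.ne_iff.mp hxy
  set θ : Fin 3 → ℤ := Pi.single j 1 with hθ
  refine ⟨_, ⟨char3 θ, Algebra.subset_adjoin ⟨θ, rfl⟩, rfl⟩, ?_⟩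
  dsimp only
  rw [char3_apply, char3_apply]
  have hx : ∀ z : Y, ∏ i, fourier (θ i) (z i) = fourier 1 (z j) := by
    intro z
    rw [Finset.prod_eq_single_of_mem j (Finset.mem_univ j)
      (fun i _ hi => by rw [hθ, Pi.single_eq_of_ne hi]; exact fourier_zero)]
    rw [hθ, Pi.single_eq_same]
  rw [hx, hx]
  simp only [fourier_one]
  intro h
  exact hj (AddCircle.injective_toCircle one_ne_zero (Subtype.coe_inj.mp h))

lemma span_char3_closure_eq_top :
    (Submodule.span ℂ (Set.range char3)).topologicalClosure = ⊤ := by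
  rw [← charSubalgebra_coe]
  exact congr_arg (Subalgebra.toSubmodule <| StarSubalgebra.toSubalgebra ·)
    (ContinuousMap.starSubalgebra_topologicalClosure_eq_top_of_separatesPoints charSubalgebra
      charSubalgebra_separatesPoints)

noncomputable def charLp (ϑ : Fin 3 → ℤ) : Lp ℂ 2 (volume : Measure Y) :=
  ContinuousMap.toLp (E := ℂ) 2 (volume : Measure Y) ℂ (char3 ϑ)

lemma span_charLp_closure_eq_top :
    (Submodule.span ℂ (Set.range charLp)).topologicalClosure = ⊤ := by
  convert (ContinuousMap.toLp_denseRange ℂ (volume : Measure Y) ℂ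
    (p := 2) (by norm_num)).topologicalClosure_map_submodule span_char3_closure_eq_top
  · rfl
  erw [Submodule.map_span, ← Set.range_comp]
  rfl

lemma torus_uniq {w : Y → ℂ} (hw : MemLp w 2 (volume : Measure Y))
    (h : ∀ ϑ : Fin 3 → ℤ, (∫ y : Y, (starRingEnd ℂ) (char3 ϑ y) * w y) = 0) :
    w =ᵐ[(volume : Measure Y)] 0 := by
  set W := hw.toLp w with hWdef
  have hW : W ∈ (Submodule.span ℂ (Set.range charLp))ᗮ := by
    rw [Submodule.mem_orthogonal]
    intro u hu
    induction hu using Submodule.span_induction with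
    | mem u hu =>
      obtain ⟨ϑ, rfl⟩ := hu
      rw [MeasureTheory.L2.inner_def]
      rw [integral_congr_ae (g := fun y => (starRingEnd ℂ) (char3 ϑ y) * w y)]
      · exact h ϑ
      · filter_upwards [ContinuousMap.coeFn_toLp (p := 2) (μ := (volume : Measure Y))
          (𝕜 := ℂ) (char3 ϑ), hw.coeFn_toLp] with y h1 h2
        simp only [charLp, hWdef]
        rw [RCLike.inner_apply, h1, h2, mul_comm]
    | zero => exact inner_zero_left _
    | add u v _ _ hu hv => rw [inner_add_left, hu, hv, add_zero]
    | smul c u _ hu => rw [inner_smul_left, hu, mul_zero]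
  rw [Submodule.topologicalClosure_eq_top_iff.mp span_charLp_closure_eq_top] at hW
  have hW0 : W = 0 := hW
  calc w =ᵐ[(volume : Measure Y)] W := hw.coeFn_toLp.symm
  _ =ᵐ[(volume : Measure Y)] 0 := by rw [hW0]; exact Lp.coeFn_zero _ _ _

/-! ### Transfer from the cube to the torus -/

def IocC : Set X := Set.univ.pi fun _ => Set.Ioc (0:ℝ) 1
def IcoC : Set X := Set.univ.pi fun _ => Set.Ico (0:ℝ) 1

lemma measurableSet_IocC : MeasurableSet IocC :=
  MeasurableSet.univ_pi fun _ => measurableSet_Ioc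
lemma measurableSet_IcoC : MeasurableSet IcoC :=
  MeasurableSet.univ_pi fun _ => measurableSet_Ico

lemma IcoC_ae_eq_IocC : IcoC =ᵐ[(volume : Measure X)] IocC := by
  rw [show (volume : Measure X) = Measure.pi fun _ => volume from volume_pi]
  exact (Measure.pi_Ico_ae_eq_pi_Icc (μ := fun _ : Fin 3 => (volume : Measure ℝ))).trans
    (Measure.pi_Ioc_ae_eq_pi_Icc (μ := fun _ : Fin 3 => (volume : Measure ℝ))).symm

noncomputable def mk3 : X → Y := fun t j => (t j : AddCircle (1:ℝ))

lemma measurable_mk3 : Measurable mk3 :=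
  measurable_pi_lambda _ fun j =>
    (AddCircle.measurable_mk' (a := (1:ℝ))).comp (measurable_pi_apply j)

lemma map_mk3 : Measure.map mk3 ((volume : Measure X).restrict IocC) = (volume : Measure Y) := by
  symm
  rw [show (volume : Measure Y) = Measure.pi fun _ => volume from volume_pi]
  refine Measure.pi_eq fun s hs => ?_
  rw [Measure.map_apply measurable_mk3 (MeasurableSet.univ_pi hs)]
  have hpre : mk3 ⁻¹' (Set.univ.pi s) =
      Set.univ.pi fun j => ((↑) : ℝ → AddCircle (1:ℝ)) ⁻¹' (s j) := by
    ext t; simp [mk3, Set.mem_univ_pi]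
  rw [hpre, Measure.restrict_apply (MeasurableSet.univ_pi fun j =>
    (AddCircle.measurable_mk' (a := (1:ℝ))) (hs j))]
  have : (Set.univ.pi fun j => ((↑) : ℝ → AddCircle (1:ℝ)) ⁻¹' (s j)) ∩ IocC =
      Set.univ.pi fun j => (((↑) : ℝ → AddCircle (1:ℝ)) ⁻¹' (s j)) ∩ Set.Ioc (0:ℝ) 1 := by
    ext t; simp [IocC, Set.mem_univ_pi, forall_and]
  rw [this, show (volume : Measure X) = Measure.pi fun _ => volume from volume_pi,
    Measure.pi_pi]
  refine Finset.prod_congr rfl fun j _ => ?_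
  have h1 := (AddCircle.measurePreserving_mk (1:ℝ) 0).map_eq
  rw [← h1, Measure.map_apply (AddCircle.measurable_mk' (a := (1:ℝ))) (hs j),
    Measure.restrict_apply ((AddCircle.measurable_mk' (a := (1:ℝ))) (hs j))]
  norm_num

lemma mp_mk3 : MeasurePreserving mk3 ((volume : Measure X).restrict IocC) (volume : Measure Y) :=
  ⟨measurable_mk3, map_mk3⟩

noncomputable def lift3 : Y → X := fun y j =>
  ((AddCircle.measurableEquivIoc (1:ℝ) 0 (y j) : Set.Ioc (0:ℝ) (0+1)) : ℝ)

lemma measurable_lift3 : Measurable lift3 :=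
  measurable_pi_lambda _ fun j =>
    measurable_subtype_coe.comp
      ((AddCircle.measurableEquivIoc (1:ℝ) 0).measurable.comp (measurable_pi_apply j))

lemma lift3_mk3 {t : X} (ht : t ∈ IocC) : lift3 (mk3 t) = t := by
  funext j
  have htj : t j ∈ Set.Ioc (0:ℝ) (0+1) := by
    have := ht j (Set.mem_univ j); simpa using this
  have : AddCircle.liftIoc (1:ℝ) 0 id ((t j : AddCircle (1:ℝ))) = t j :=
    AddCircle.liftIoc_coe_apply htj
  exact this

lemma char3_mk3 (ϑ : Fin 3 → ℤ) (t : X) : char3 ϑ (mk3 t) = E1 ϑ t := by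
  rw [char3_apply, E1]
  rw [show mk3 t = fun j => ((t j : ℝ) : AddCircle (1:ℝ)) from rfl]
  simp only [fourier_coe_apply]
  rw [← Complex.exp_sum]
  congr 1
  push_cast
  simp only [Fin.sum_univ_three]
  ring

lemma cube_vanish {v : X → ℂ} (hv : MemLp v 2 (volume : Measure X))
    (hmeas : StronglyMeasurable v)
    (hsupp : ∀ t, t ∉ IcoC → v t = 0)
    (h : ∀ ϑ : Fin 3 → ℤ, (∫ t : X, (starRingEnd ℂ) (E1 ϑ t) * v t) = 0) :
    v =ᵐ[(volume : Measure X)] 0 := by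
  set w : Y → ℂ := v ∘ lift3 with hw
  have hwsm : StronglyMeasurable w := hmeas.comp_measurable measurable_lift3
  have hkey : ∀ t ∈ IocC, w (mk3 t) = v t := fun t ht => by
    rw [hw, Function.comp_apply, lift3_mk3 ht]
  have hae : (w ∘ mk3) =ᵐ[(volume : Measure X).restrict IocC] v :=
    ae_restrict_of_forall_mem measurableSet_IocC hkey
  have hwmem : MemLp w 2 (volume : Measure Y) := by
    refine ⟨hwsm.aestronglyMeasurable, ?_⟩
    rw [← eLpNorm_comp_measurePreserving (p := 2) hwsm.aestronglyMeasurable mp_mk3]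
    calc eLpNorm (w ∘ mk3) 2 ((volume : Measure X).restrict IocC)
        = eLpNorm v 2 ((volume : Measure X).restrict IocC) := eLpNorm_congr_ae hae
      _ ≤ eLpNorm v 2 (volume : Measure X) :=
          eLpNorm_mono_measure _ Measure.restrict_le_self
      _ < ⊤ := hv.2
  have h' : ∀ ϑ : Fin 3 → ℤ, (∫ y : Y, (starRingEnd ℂ) (char3 ϑ y) * w y) = 0 := by
    intro ϑ
    rw [← map_mk3, integral_map measurable_mk3.aemeasurable]
    swap
    · rw [map_mk3]
      exact ((continuous_star.comp (char3 ϑ).continuous).stronglyMeasurable.aestronglyMeasurable).mul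
        hwsm.aestronglyMeasurable
    rw [show (fun t => (starRingEnd ℂ) (char3 ϑ (mk3 t)) * w (mk3 t))
        = fun t => (starRingEnd ℂ) (char3 ϑ (mk3 t)) * (w ∘ mk3) t from rfl]
    have : (fun t => (starRingEnd ℂ) (char3 ϑ (mk3 t)) * (w ∘ mk3) t)
        =ᵐ[(volume : Measure X).restrict IocC]
          fun t => (starRingEnd ℂ) (E1 ϑ t) * v t := by
      filter_upwards [hae] with t ht
      rw [ht, char3_mk3]
    rw [integral_congr_ae this, ← Measure.restrict_congr_set IcoC_ae_eq_IocC,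
      setIntegral_eq_integral_of_forall_compl_eq_zero
        (fun t ht => by rw [hsupp t ht, mul_zero])]
    exact h ϑ
  have hw0 : w =ᵐ[(volume : Measure Y)] 0 := torus_uniq hwmem h'
  have : (w ∘ mk3) =ᵐ[(volume : Measure X).restrict IocC] 0 := by
    have := ae_eq_comp (measurable_mk3.aemeasurable (μ := (volume : Measure X).restrict IocC))
      (map_mk3.symm ▸ hw0)
    simpa using this
  have hv0 : v =ᵐ[(volume : Measure X).restrict IocC] 0 := hae.symm.trans this
  have hv0' : v =ᵐ[(volume : Measure X).restrict IcoC] 0 := by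
    rwa [Measure.restrict_congr_set IcoC_ae_eq_IocC]
  refine ae_of_ae_restrict_of_ae_restrict_compl IcoC ?_ ?_
  · exact hv0'
  · exact ae_restrict_of_forall_mem measurableSet_IcoC.compl fun t ht => hsupp t ht

/-! ### The per-η step -/

lemma eta_step (lam : ℝ) {f₀ : X → ℂ} (hf₀m : StronglyMeasurable f₀)
    (hf₀ : MemLp f₀ 2 (volume : Measure X)) (η : Fin 3 → ℤ)
    (h : ∀ ϑ : Fin 3 → ℤ, (∫ t : X, (starRingEnd ℂ) (Af lam (ϑ, η) t) * f₀ t) = 0) :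
    (fun t : X => f₀ t *
        Set.indicator IcoC (fun _ => (1:ℂ)) (fun j => t j + (η j : ℝ))) =ᵐ[(volume : Measure X)] 0 := by
  classical
  set ηr : X := fun j => (η j : ℝ) with hηr
  set v : X → ℂ := fun s =>
    (starRingEnd ℂ) (Phi lam η (s - ηr)) * f₀ (s - ηr) *
      Set.indicator IcoC (fun _ => (1:ℂ)) s with hv
  have hcoef : ∀ ϑ : Fin 3 → ℤ, (∫ s : X, (starRingEnd ℂ) (E1 ϑ s) * v s) = 0 := by
    intro ϑ
    have h1 := h ϑ
    rw [← integral_sub_right_eq_self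
      (fun t => (starRingEnd ℂ) (Af lam (ϑ, η) t) * f₀ t) ηr] at h1
    rw [← h1]
    apply integral_congr_ae
    apply Filter.Eventually.of_forall
    intro s
    have hind : (fun j => (s - ηr) j + (η j : ℝ)) = s := by
      funext j; simp [hηr]
    have hindIco : Set.indicator (Set.univ.pi fun _ : Fin 3 => Set.Ico (0 : ℝ) 1)
        (fun _ => (1 : ℂ)) (fun j => (s - ηr) j + (η j : ℝ))
        = Set.indicator IcoC (fun _ => (1:ℂ)) s := by
      rw [hind]; rfl
    rw [hv]
    show (starRingEnd ℂ) (E1 ϑ s) *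
        ((starRingEnd ℂ) (Phi lam η (s - ηr)) * f₀ (s - ηr) *
          Set.indicator IcoC (fun _ => (1:ℂ)) s)
      = (starRingEnd ℂ) (Af lam (ϑ, η) (s - ηr)) * f₀ (s - ηr)
    unfold Af
    rw [map_mul, map_mul, hindIco, conj_ind]
    have hE1 : (starRingEnd ℂ) (E1 ϑ (s - ηr)) = (starRingEnd ℂ) (E1 ϑ s) := by
      unfold E1
      rw [← Complex.exp_conj, ← Complex.exp_conj]
      rw [show ((((2 * Real.pi * ∑ j, (s - ηr) j * (ϑ j : ℝ) : ℝ)) : ℂ) * Complex.I)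
          = (((2 * Real.pi * ∑ j, s j * (ϑ j : ℝ) : ℝ) : ℂ) * Complex.I)
            - ((∑ j, η j * ϑ j : ℤ) : ℂ) * (2 * Real.pi * Complex.I) by
        push_cast
        simp only [Fin.sum_univ_three]
        show ((2:ℂ) * _ * ((((s 0 - ηr 0)) : ℝ) * _ + (((s 1 - ηr 1)) : ℝ) * _
          + (((s 2 - ηr 2)) : ℝ) * _)) * _ = _
        push_cast [hηr]
        ring]
      rw [map_sub, Complex.exp_sub]
      rw [show (starRingEnd ℂ) (((∑ j, η j * ϑ j : ℤ) : ℂ) * (2 * Real.pi * Complex.I))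
          = -(((∑ j, η j * ϑ j : ℤ) : ℂ) * (2 * Real.pi * Complex.I)) by
        simp only [map_mul, map_intCast, map_ofNat, Complex.conj_ofReal, Complex.conj_I]
        ring]
      rw [show -(((∑ j, η j * ϑ j : ℤ) : ℂ) * (2 * Real.pi * Complex.I))
          = ((-∑ j, η j * ϑ j : ℤ) : ℂ) * (2 * Real.pi * Complex.I) by push_cast; ring]
      rw [Complex.exp_int_mul_two_pi_mul_I, div_one]
    rw [hE1]
    ring
  have hsub : Measurable fun s : X => s - ηr := measurable_sub_const ηr
  have hvm : StronglyMeasurable v := by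
    apply StronglyMeasurable.mul
    apply StronglyMeasurable.mul
    · exact ((continuous_star.comp (continuous_Phi lam η)).stronglyMeasurable).comp_measurable hsub
    · exact hf₀m.comp_measurable hsub
    · exact (stronglyMeasurable_const.indicator measurableSet_IcoC)
  have hvmem : MemLp v 2 (volume : Measure X) := by
    have hbase : MemLp (fun s : X => f₀ (s - ηr)) 2 (volume : Measure X) :=
      hf₀.comp_measurePreserving (measurePreserving_sub_right (volume : Measure X) ηr)
    refine MemLp.of_le hbase hvm.aestronglyMeasurable ?_
    apply Filter.Eventually.of_forall
    intro s
    rw [hv]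
    simp only [norm_mul, RCLike.norm_conj]
    unfold Phi
    rw [Complex.norm_exp_ofReal_mul_I, one_mul]
    by_cases hs : s ∈ IcoC
    · simp [hs]
    · simp [hs]
  have hsupp : ∀ s, s ∉ IcoC → v s = 0 := by
    intro s hs; rw [hv]; simp [Set.indicator_of_notMem hs]
  have hv0 : v =ᵐ[(volume : Measure X)] 0 := cube_vanish hvmem hvm hsupp hcoef
  have hfi0 : (fun s : X => f₀ (s - ηr) * Set.indicator IcoC (fun _ => (1:ℂ)) s)
      =ᵐ[(volume : Measure X)] 0 := by
    filter_upwards [hv0] with s hs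
    rw [hv] at hs
    simp only [Pi.zero_apply] at hs ⊢
    have hne : (starRingEnd ℂ) (Phi lam η (s - ηr)) ≠ 0 := by
      simp [Phi, Complex.exp_ne_zero]
    rw [mul_assoc] at hs
    exact (mul_eq_zero.mp hs).resolve_left hne
  have := ae_eq_comp (f := fun t : X => t + ηr)
    ((measurable_add_const ηr).aemeasurable (μ := (volume : Measure X)))
    (((measurePreserving_add_right (volume : Measure X) ηr).map_eq).symm ▸ hfi0)
  have heq : ((fun s : X => f₀ (s - ηr) * Set.indicator IcoC (fun _ => (1:ℂ)) s)
      ∘ (fun t : X => t + ηr))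
      = fun t : X => f₀ t * Set.indicator IcoC (fun _ => (1:ℂ)) (fun j => t j + (η j : ℝ)) := by
    funext t
    simp only [Function.comp_apply, add_sub_cancel_right]
    congr 1
  rw [heq] at this
  simpa using this

end DyninFolland

open DyninFolland in
/-- For any fixed `λ ≠ 0`, the family of functions on `ℝ³`
`t ↦ e^{2πi(t·ϑ)} e^{2πi(t₁t₂η₃/(2λ) + t₁η₂(t₃+η₃)/λ)} 1_{[0,1)³}(t + η)`,
indexed by `(ϑ, η) ∈ ℤ³ × ℤ³`, forms an orthonormal basis of `L²(ℝ³)`.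
(Coordinates: `t 0 = t₁`, `t 1 = t₂`, `t 2 = t₃`.) -/
theorem dynin_folland_orthonormal_basis (lam : ℝ) (hlam : lam ≠ 0)
    (F : (Fin 3 → ℤ) × (Fin 3 → ℤ) → Lp ℂ 2 (volume : Measure (Fin 3 → ℝ)))
    (hF : ∀ p : (Fin 3 → ℤ) × (Fin 3 → ℤ),
      (F p : (Fin 3 → ℝ) → ℂ) =ᵐ[volume] fun t =>
        Complex.exp (((2 * Real.pi * ∑ j, t j * (p.1 j : ℝ) : ℝ) : ℂ) * Complex.I) *
        Complex.exp (((2 * Real.pi *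
            (t 0 * t 1 * (p.2 2 : ℝ) / (2 * lam) +
              t 0 * (p.2 1 : ℝ) * (t 2 + (p.2 2 : ℝ)) / lam) : ℝ) : ℂ) * Complex.I) *
        Set.indicator (Set.univ.pi fun _ : Fin 3 => Set.Ico (0 : ℝ) 1)
          (fun _ => (1 : ℂ)) (fun j => t j + (p.2 j : ℝ))) :
    Orthonormal ℂ F ∧ (Submodule.span ℂ (Set.range F)).topologicalClosure = ⊤ := by
  have hFae : ∀ p, (F p : (Fin 3 → ℝ) → ℂ) =ᵐ[volume] Af lam p := fun p => hF p
  constructor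
  · rw [orthonormal_iff_ite]
    intro p q
    rw [MeasureTheory.L2.inner_def]
    rw [integral_congr_ae (g := fun t => (starRingEnd ℂ) (Af lam p t) * Af lam q t)]
    · exact integral_conj_Af lam p q
    · filter_upwards [hFae p, hFae q] with t h1 h2
      rw [RCLike.inner_apply, h1, h2, mul_comm]
  · rw [Submodule.topologicalClosure_eq_top_iff, Submodule.eq_bot_iff]
    intro f hf
    have hperp : ∀ p : P3, (∫ t : X, (starRingEnd ℂ) (Af lam p t) * f t) = 0 := by
      intro p
      have h0 : inner ℂ (F p) f = (0 : ℂ) :=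
        (Submodule.mem_orthogonal _ _).mp hf _ (Submodule.subset_span ⟨p, rfl⟩)
      rw [MeasureTheory.L2.inner_def] at h0
      rw [← h0]
      apply integral_congr_ae
      filter_upwards [hFae p] with t h1
      rw [RCLike.inner_apply, h1, mul_comm]
    have hf₀m : StronglyMeasurable (f : X → ℂ) := Lp.stronglyMeasurable f
    have hf₀ : MemLp (f : X → ℂ) 2 (volume : Measure X) := Lp.memLp f
    have hη : ∀ η : Fin 3 → ℤ, (fun t : X => (f : X → ℂ) t *
        Set.indicator IcoC (fun _ => (1:ℂ)) (fun j => t j + (η j : ℝ)))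
          =ᵐ[(volume : Measure X)] 0 := fun η =>
      eta_step lam hf₀m hf₀ η (fun ϑ => hperp (ϑ, η))
    have hall : ∀ᵐ t : X ∂(volume : Measure X), ∀ η : Fin 3 → ℤ,
        (f : X → ℂ) t * Set.indicator IcoC (fun _ => (1:ℂ)) (fun j => t j + (η j : ℝ)) = 0 := by
      rw [MeasureTheory.ae_all_iff]
      intro η
      filter_upwards [hη η] with t ht
      simpa using ht
    have hzero : (f : X → ℂ) =ᵐ[(volume : Measure X)] 0 := by
      filter_upwards [hall] with t ht
      have hmem : (fun j => t j + ((fun i => -⌊t i⌋ : Fin 3 → ℤ) j : ℝ)) ∈ IcoC := by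
        intro j _
        push_cast
        constructor
        · have := Int.fract_nonneg (t j)
          rw [Int.fract] at this; linarith
        · have := Int.fract_lt_one (t j)
          rw [Int.fract] at this; linarith
      have := ht (fun i => -⌊t i⌋)
      rw [Set.indicator_of_mem hmem, mul_one] at this
      exact this
    exact Lp.eq_zero_iff_ae_eq_zero.mpr hzero
end
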